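/- arXiv:0912.2795 — 3 statements merged into one kernel-verified Lean document; each statement's English description precedes it below -/
import Mathlib

section
/- Let X₁ have distribution function F with E X₁ = 0, E X₁² = 1, β³ = E|X₁|³ < ∞, let f be its characteristic function, f_n(t) = (f(t/√n))ⁿ, ℓ_n = β³/√n + 1/√n. Then for every n ≥ 1 and every t ∈ ℝ: |f_n(t)| ≤ exp{−χ(t, ℓ_n)}, where χ(t,ε) = t²/2 − κ ε |t|³ for |t| ≤ θ₀/ε, χ(t,ε) = (1 − cos(εt))/ε² for θ₀ < ε|t| ≤ 2π, and χ(t,ε) = 0 for |t| > 2π/ε. -/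
open MeasureTheory ProbabilityTheory

/-- `κ = sup_{x>0} |cos x − 1 + x²/2| / x³ = 0.09916191…`. -/
noncomputable def kappa : ℝ :=
  ⨆ x : Set.Ioi (0 : ℝ), |Real.cos x - 1 + (x : ℝ) ^ 2 / 2| / (x : ℝ) ^ 3

/-- The Prawitz majorant function `χ(t, ε)`: `χ(t,ε) = t²/2 − κ ε |t|³` for `|t| ≤ θ₀/ε`,
`χ(t,ε) = (1 − cos(εt))/ε²` for `θ₀ < ε|t| ≤ 2π`, and `χ(t,ε) = 0` for `|t| > 2π/ε`. -/
noncomputable def chi (θ₀ κ t ε : ℝ) : ℝ :=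
  if |t| ≤ θ₀ / ε then t ^ 2 / 2 - κ * ε * |t| ^ 3
  else if ε * |t| ≤ 2 * Real.pi then (1 - Real.cos (ε * t)) / ε ^ 2
  else 0

set_option linter.unusedSectionVars false

section KappaFacts

lemma kappa_bdd : BddAbove (Set.range fun x : Set.Ioi (0 : ℝ) =>
    |Real.cos x - 1 + (x : ℝ) ^ 2 / 2| / (x : ℝ) ^ 3) := by
  refine ⟨3, ?_⟩
  rintro y ⟨⟨x, hx⟩, rfl⟩
  simp only [Set.mem_Ioi] at hx
  have hx3 : (0:ℝ) < x ^ 3 := by positivity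
  rw [div_le_iff₀ hx3]
  rcases le_or_gt x 1 with h1 | h1
  · have := Real.cos_bound (x := x) (by rw [abs_of_pos hx]; exact h1)
    have h2 : |Real.cos x - 1 + x ^ 2 / 2| ≤ |x| ^ 4 * (5 / 96) := by
      have e : Real.cos x - 1 + x ^ 2 / 2 = Real.cos x - (1 - x ^ 2 / 2) := by ring
      rw [e]; exact Real.cos_bound (by rw [abs_of_pos hx]; exact h1)
    rw [abs_of_pos hx] at h2
    nlinarith [abs_nonneg (Real.cos x - 1 + x ^ 2 / 2), pow_pos hx 4, pow_pos hx 3]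
  · have h2 : |Real.cos x - 1 + x ^ 2 / 2| ≤ 2 + x ^ 2 / 2 := by
      have := Real.neg_one_le_cos x
      have := Real.cos_le_one x
      rw [abs_le]; constructor <;> nlinarith
    have hx2 : x ^ 2 ≤ x ^ 3 := by nlinarith
    have hx0 : (1:ℝ) ≤ x ^ 3 := by nlinarith
    nlinarith

lemma kappa_nonneg : 0 ≤ kappa := by
  have := le_ciSup kappa_bdd (⟨1, by norm_num⟩ : Set.Ioi (0:ℝ))
  refine le_trans ?_ this
  positivity

lemma kappa_ineq {u : ℝ} (hu : 0 ≤ u) : u ^ 2 / 2 - kappa * u ^ 3 ≤ 1 - Real.cos u := by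
  rcases eq_or_lt_of_le hu with rfl | hu'
  · simp
  · rw [kappa]
    have h := le_ciSup kappa_bdd (⟨u, hu'⟩ : Set.Ioi (0:ℝ))
    simp only at h
    have hu3 : (0:ℝ) < u ^ 3 := by positivity
    rw [div_le_iff₀ hu3] at h
    have := le_abs_self (Real.cos u - 1 + u ^ 2 / 2)
    nlinarith

end KappaFacts

section AnalysisFacts
open Real


noncomputable def gfun (u : ℝ) : ℝ := (1 - Real.cos u) / u ^ 2
noncomputable def gd (u : ℝ) : ℝ := (u * Real.sin u - 2 * (1 - Real.cos u)) / u ^ 3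
noncomputable def Nf (u : ℝ) : ℝ := 3 - 3 * Real.cos u - u * Real.sin u - u ^ 2 / 2
noncomputable def Mf (u : ℝ) : ℝ := u ^ 2 * Real.cos u - 4 * u * Real.sin u + 6 - 6 * Real.cos u
noncomputable def Kf (u : ℝ) : ℝ := (Real.cos u - 1 + u ^ 2 / 2) / u ^ 3

lemma hasDerivAt_Nf (u : ℝ) :
    HasDerivAt Nf (2 * Real.sin u - u * Real.cos u - u) u := by
  have h := (((hasDerivAt_const u (3:ℝ)).sub ((hasDerivAt_const u (3:ℝ)).mul (Real.hasDerivAt_cos u))).sub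
      ((hasDerivAt_id u).mul (Real.hasDerivAt_sin u))).sub ((hasDerivAt_pow 2 u).div_const 2)
  refine h.congr_deriv ?_; simp [id]; ring

lemma hasDerivAt_Mf (u : ℝ) :
    HasDerivAt Mf (2 * Real.sin u - u ^ 2 * Real.sin u - 2 * u * Real.cos u) u := by
  have h := ((((hasDerivAt_pow 2 u).mul (Real.hasDerivAt_cos u)).sub
      (((hasDerivAt_const u (4:ℝ)).mul (hasDerivAt_id u)).mul (Real.hasDerivAt_sin u))).add
      (hasDerivAt_const u (6:ℝ))).sub ((hasDerivAt_const u (6:ℝ)).mul (Real.hasDerivAt_cos u))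
  refine h.congr_deriv ?_; simp [id]; ring

lemma hasDerivAt_gfun {u : ℝ} (hu : u ≠ 0) : HasDerivAt gfun (gd u) u := by
  have h := ((hasDerivAt_const u (1:ℝ)).sub (Real.hasDerivAt_cos u)).div (hasDerivAt_pow 2 u)
      (pow_ne_zero 2 hu)
  refine h.congr_deriv ?_
  unfold gd; simp only [Pi.sub_apply, Pi.add_apply, Pi.mul_apply, id_eq]; field_simp; ring

lemma hasDerivAt_gd {u : ℝ} (hu : u ≠ 0) : HasDerivAt gd (Mf u / u ^ 4) u := by
  have h := (((hasDerivAt_id u).mul (Real.hasDerivAt_sin u)).sub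
      ((hasDerivAt_const u (2:ℝ)).mul ((hasDerivAt_const u (1:ℝ)).sub (Real.hasDerivAt_cos u)))).div
      (hasDerivAt_pow 3 u) (pow_ne_zero 3 hu)
  refine h.congr_deriv ?_
  unfold Mf; simp only [Pi.sub_apply, Pi.add_apply, Pi.mul_apply, id_eq]; field_simp; ring

-- sign lemmas
lemma sin_nonpos_pi_two_pi {u : ℝ} (h1 : π ≤ u) (h2 : u ≤ 2 * π) : Real.sin u ≤ 0 := by
  have : Real.sin u = Real.sin (u - 2 * π) := by
    rw [Real.sin_sub_two_pi]
  rw [this]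
  exact Real.sin_nonpos_of_nonpos_of_neg_pi_le (by linarith) (by linarith)

lemma cos_nonpos_mid {u : ℝ} (h1 : π ≤ u) (h2 : u ≤ π + π / 2) : Real.cos u ≤ 0 :=
  Real.cos_nonpos_of_pi_div_two_le_of_le (by linarith) (by linarith)

lemma cos_nonneg_late {u : ℝ} (h1 : π + π / 2 ≤ u) (h2 : u ≤ 2 * π) : 0 ≤ Real.cos u := by
  have : Real.cos u = Real.cos (2 * π - u) := by rw [Real.cos_two_pi_sub]
  rw [this]
  exact Real.cos_nonneg_of_mem_Icc ⟨by linarith, by linarith⟩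

-- N' ≥ 0 on [0, π]
lemma Nd_nonneg {u : ℝ} (h0 : 0 ≤ u) (h1 : u ≤ π) :
    0 ≤ 2 * Real.sin u - u * Real.cos u - u := by
  have key : 2 * Real.sin u - u * Real.cos u - u
      = 2 * Real.cos (u / 2) * (2 * Real.sin (u / 2) - u * Real.cos (u / 2)) := by
    have hs : Real.sin u = 2 * Real.sin (u / 2) * Real.cos (u / 2) := by
      rw [← Real.sin_two_mul]; ring_nf
    have hc : Real.cos u = 2 * Real.cos (u / 2) ^ 2 - 1 := by
      rw [← Real.cos_two_mul]; ring_nf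
    rw [hs, hc]; ring
  rw [key]
  have hc0 : 0 ≤ Real.cos (u / 2) :=
    Real.cos_nonneg_of_mem_Icc ⟨by linarith [Real.pi_pos], by linarith⟩
  rcases eq_or_lt_of_le h0 with rfl | hu
  · simp
  rcases lt_or_ge (u / 2) (π / 2) with hlt | hge
  · have htan := Real.lt_tan (by linarith : 0 < u / 2) hlt
    have hcpos : 0 < Real.cos (u / 2) :=
      Real.cos_pos_of_mem_Ioo ⟨by linarith [Real.pi_pos], hlt⟩
    rw [Real.tan_eq_sin_div_cos, lt_div_iff₀ hcpos] at htan
    nlinarith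
  · have : u = π := by linarith
    subst this
    simp [Real.cos_pi_div_two]

-- N' ≤ 0 on [π, 2π]
lemma Nd_nonpos {u : ℝ} (h1 : π ≤ u) (h2 : u ≤ 2 * π) :
    2 * Real.sin u - u * Real.cos u - u ≤ 0 := by
  have key : 2 * Real.sin u - u * Real.cos u - u
      = 2 * Real.cos (u / 2) * (2 * Real.sin (u / 2) - u * Real.cos (u / 2)) := by
    have hs : Real.sin u = 2 * Real.sin (u / 2) * Real.cos (u / 2) := by
      rw [← Real.sin_two_mul]; ring_nf
    have hc : Real.cos u = 2 * Real.cos (u / 2) ^ 2 - 1 := by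
      rw [← Real.cos_two_mul]; ring_nf
    rw [hs, hc]; ring
  rw [key]
  have hc0 : Real.cos (u / 2) ≤ 0 :=
    Real.cos_nonpos_of_pi_div_two_le_of_le (by linarith) (by linarith [Real.pi_pos])
  have hs0 : 0 ≤ Real.sin (u / 2) :=
    Real.sin_nonneg_of_nonneg_of_le_pi (by linarith [Real.pi_pos]) (by linarith)
  have hu0 : 0 < u := by linarith [Real.pi_pos]
  nlinarith [mul_nonneg hs0 (neg_nonneg.mpr hc0), mul_nonneg hu0.le (mul_self_nonneg (Real.cos (u / 2)))]


section ThetaSection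
variable (θ : ℝ) (hθ1 : π ≤ θ) (hθ2 : θ ≤ 2 * π)
    (hroot : θ ^ 2 + 2 * θ * Real.sin θ + 6 * (Real.cos θ - 1) = 0)

lemma hasDerivAt_Kf {u : ℝ} (hu : u ≠ 0) : HasDerivAt Kf (Nf u / u ^ 4) u := by
  have h := (((Real.hasDerivAt_cos u).sub (hasDerivAt_const u (1:ℝ))).add
      ((hasDerivAt_pow 2 u).div_const 2)).div (hasDerivAt_pow 3 u) (pow_ne_zero 3 hu)
  refine h.congr_deriv ?_
  unfold Nf; simp only [Pi.sub_apply, Pi.add_apply, Pi.mul_apply, id_eq]; field_simp; ring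

include hθ1 hθ2 hroot in
lemma Nf_nonneg {u : ℝ} (h0 : 0 ≤ u) (hu : u ≤ θ) : 0 ≤ Nf u := by
  have hNθ : Nf θ = 0 := by unfold Nf; linarith
  have hN0 : Nf 0 = 0 := by unfold Nf; simp
  have mono1 : MonotoneOn Nf (Set.Icc 0 π) := by
    refine monotoneOn_of_deriv_nonneg (convex_Icc _ _)
      (fun x _ => ((hasDerivAt_Nf x).continuousAt).continuousWithinAt)
      (fun x _ => ((hasDerivAt_Nf x).differentiableAt).differentiableWithinAt) ?_
    intro x hx
    rw [interior_Icc] at hx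
    rw [(hasDerivAt_Nf x).deriv]
    exact Nd_nonneg hx.1.le hx.2.le
  have anti1 : AntitoneOn Nf (Set.Icc π (2 * π)) := by
    refine antitoneOn_of_deriv_nonpos (convex_Icc _ _)
      (fun x _ => ((hasDerivAt_Nf x).continuousAt).continuousWithinAt)
      (fun x _ => ((hasDerivAt_Nf x).differentiableAt).differentiableWithinAt) ?_
    intro x hx
    rw [interior_Icc] at hx
    rw [(hasDerivAt_Nf x).deriv]
    exact Nd_nonpos hx.1.le hx.2.le
  rcases le_or_gt u π with h | h
  · have := mono1 (Set.mem_Icc.mpr ⟨le_refl 0, Real.pi_pos.le⟩) (Set.mem_Icc.mpr ⟨h0, h⟩) h0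
    rw [hN0] at this; exact this
  · have := anti1 (Set.mem_Icc.mpr ⟨h.le, by linarith⟩) (Set.mem_Icc.mpr ⟨hθ1, hθ2⟩) hu
    rw [hNθ] at this; exact this

include hθ1 hθ2 hroot in
lemma Kf_le {u : ℝ} (h0 : 0 < u) (hu : u ≤ θ) :
    Real.cos u - 1 + u ^ 2 / 2 ≤ (2 - 2 * Real.cos θ - θ * Real.sin θ) / θ ^ 3 * u ^ 3 := by
  have hθpos : 0 < θ := lt_of_lt_of_le Real.pi_pos hθ1
  have hKθ : Kf θ = (2 - 2 * Real.cos θ - θ * Real.sin θ) / θ ^ 3 := by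
    unfold Kf
    rw [div_eq_div_iff (by positivity) (by positivity)]
    linear_combination (θ ^ 3 / 2) * hroot
  have mono : MonotoneOn Kf (Set.Icc u θ) := by
    refine monotoneOn_of_deriv_nonneg (convex_Icc _ _)
      (fun x hx => ((hasDerivAt_Kf (lt_of_lt_of_le h0 hx.1).ne').continuousAt).continuousWithinAt)
      (fun x hx => ?_) ?_
    · rw [interior_Icc] at hx
      exact ((hasDerivAt_Kf (lt_trans h0 hx.1).ne').differentiableAt).differentiableWithinAt
    · intro x hx
      rw [interior_Icc] at hx
      have hx0 : 0 < x := lt_trans h0 hx.1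
      rw [(hasDerivAt_Kf hx0.ne').deriv]
      exact div_nonneg (Nf_nonneg θ hθ1 hθ2 hroot hx0.le hx.2.le) (by positivity)
  have := mono (Set.mem_Icc.mpr ⟨le_refl u, hu⟩) (Set.mem_Icc.mpr ⟨hu, le_refl θ⟩) hu
  rw [hKθ] at this
  unfold Kf at this
  rw [div_le_iff₀ (by positivity)] at this
  linarith [this]

lemma Mf_nonneg {u : ℝ} (h1 : π ≤ u) (h2 : u ≤ 2 * π) : 0 ≤ Mf u := by
  rcases le_or_gt u (π + π / 2) with h | h
  · have mono : MonotoneOn Mf (Set.Icc π (π + π / 2)) := by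
      refine monotoneOn_of_deriv_nonneg (convex_Icc _ _)
        (fun x _ => ((hasDerivAt_Mf x).continuousAt).continuousWithinAt)
        (fun x _ => ((hasDerivAt_Mf x).differentiableAt).differentiableWithinAt) ?_
      intro x hx
      rw [interior_Icc] at hx
      obtain ⟨hxa, hxb⟩ := hx
      rw [(hasDerivAt_Mf x).deriv]
      have hs : Real.sin x ≤ 0 := sin_nonpos_pi_two_pi hxa.le (by linarith [Real.pi_pos])
      have hc : Real.cos x ≤ 0 :=
        Real.cos_nonpos_of_pi_div_two_le_of_le (by linarith [Real.pi_pos]) (by linarith)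
      have hx2 : (2:ℝ) ≤ x ^ 2 := by nlinarith [Real.pi_gt_three]
      nlinarith [mul_nonneg (neg_nonneg.mpr hs) (sub_nonneg.mpr hx2),
        mul_nonneg (neg_nonneg.mpr hc) (by linarith [Real.pi_pos] : (0:ℝ) ≤ x)]
    have hMπ : 0 ≤ Mf π := by
      unfold Mf
      rw [Real.cos_pi, Real.sin_pi]
      nlinarith [Real.pi_lt_d2]
    have := mono (Set.mem_Icc.mpr ⟨le_refl π, by linarith [Real.pi_pos]⟩)
      (Set.mem_Icc.mpr ⟨h1, h⟩) h1
    linarith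
  · unfold Mf
    have hs : Real.sin u ≤ 0 := sin_nonpos_pi_two_pi h1 h2
    have hc : 0 ≤ Real.cos u := cos_nonneg_late h.le h2
    have hc1 : Real.cos u ≤ 1 := Real.cos_le_one u
    nlinarith [mul_nonneg (neg_nonneg.mpr hs) (by linarith [Real.pi_pos] : (0:ℝ) ≤ u),
      mul_nonneg hc (sq_nonneg u)]

lemma gd_mono : MonotoneOn gd (Set.Icc π (2 * π)) := by
  refine monotoneOn_of_deriv_nonneg (convex_Icc _ _)
    (fun x hx => ((hasDerivAt_gd (lt_of_lt_of_le Real.pi_pos hx.1).ne').continuousAt).continuousWithinAt)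
    (fun x hx => ?_) ?_
  · rw [interior_Icc] at hx
    exact ((hasDerivAt_gd (lt_trans Real.pi_pos hx.1).ne').differentiableAt).differentiableWithinAt
  · intro x hx
    rw [interior_Icc] at hx
    have hx0 : 0 < x := lt_trans Real.pi_pos hx.1
    rw [(hasDerivAt_gd hx0.ne').deriv]
    exact div_nonneg (Mf_nonneg hx.1.le hx.2.le) (by positivity)

lemma gd_nonpos {w : ℝ} (h1 : π ≤ w) (h2 : w ≤ 2 * π) : gd w ≤ 0 := by
  unfold gd
  apply div_nonpos_of_nonpos_of_nonneg
  · have hs : Real.sin w ≤ 0 := sin_nonpos_pi_two_pi h1 h2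
    have hc : Real.cos w ≤ 1 := Real.cos_le_one w
    nlinarith [mul_nonneg (neg_nonneg.mpr hs) (by linarith [Real.pi_pos] : (0:ℝ) ≤ w)]
  · exact pow_nonneg (by linarith [Real.pi_pos]) 3

include hθ1 hθ2 in
lemma tangent_le {w y : ℝ} (hw : w ∈ Set.Icc θ (2 * π)) (hy : y ∈ Set.Icc θ (2 * π)) :
    gfun w + gd w * (y - w) ≤ gfun y := by
  have hsub : Set.Icc θ (2 * π) ⊆ Set.Icc π (2 * π) := Set.Icc_subset_Icc hθ1 (le_refl _)
  have hpos : ∀ x ∈ Set.Icc θ (2 * π), (0:ℝ) < x := fun x hx =>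
    lt_of_lt_of_le Real.pi_pos (le_trans hθ1 hx.1)
  rcases lt_trichotomy y w with h | h | h
  · obtain ⟨ξ, hξ, hslope⟩ := exists_hasDerivAt_eq_slope gfun gd h
      (fun x hx => (hasDerivAt_gfun (hpos x ⟨le_trans hy.1 hx.1, le_trans hx.2 hw.2⟩).ne').continuousAt.continuousWithinAt)
      (fun x hx => hasDerivAt_gfun (hpos x ⟨le_trans hy.1 hx.1.le, le_trans hx.2.le hw.2⟩).ne')
    have hξmem : ξ ∈ Set.Icc π (2 * π) :=
      ⟨le_trans hθ1 (le_trans hy.1 hξ.1.le), le_trans hξ.2.le hw.2⟩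
    have : gd ξ ≤ gd w := gd_mono hξmem (hsub hw) hξ.2.le
    rw [hslope] at this
    rw [div_le_iff₀ (by linarith)] at this
    nlinarith
  · subst h; simp
  · obtain ⟨ξ, hξ, hslope⟩ := exists_hasDerivAt_eq_slope gfun gd h
      (fun x hx => (hasDerivAt_gfun (hpos x ⟨le_trans hw.1 hx.1, le_trans hx.2 hy.2⟩).ne').continuousAt.continuousWithinAt)
      (fun x hx => hasDerivAt_gfun (hpos x ⟨le_trans hw.1 hx.1.le, le_trans hx.2.le hy.2⟩).ne')
    have hξmem : ξ ∈ Set.Icc π (2 * π) :=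
      ⟨le_trans hθ1 (le_trans hw.1 hξ.1.le), le_trans hξ.2.le hy.2⟩
    have : gd w ≤ gd ξ := gd_mono (hsub hw) hξmem hξ.1.le
    rw [hslope] at this
    rw [le_div_iff₀ (by linarith)] at this
    nlinarith

include hθ1 hθ2 hroot in
lemma family {w : ℝ} (hw1 : θ ≤ w) (hw2 : w ≤ 2 * π) {u : ℝ} (hu : 0 ≤ u) :
    (gfun w - w * gd w) * u ^ 2 + gd w * u ^ 3 ≤ 1 - Real.cos u := by
  have hθpos : 0 < θ := lt_of_lt_of_le Real.pi_pos hθ1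
  have hwmem : w ∈ Set.Icc θ (2 * π) := ⟨hw1, hw2⟩
  have hgdw : gd w ≤ 0 := gd_nonpos (le_trans hθ1 hw1) hw2
  set κ₀ : ℝ := (2 - 2 * Real.cos θ - θ * Real.sin θ) / θ ^ 3 with hκ₀
  have h3 : θ ^ 3 ≠ 0 := by positivity
  have hgdθ : gd θ = -κ₀ := by
    rw [hκ₀]; unfold gd
    field_simp
    ring
  have hgθ : gfun θ + κ₀ * θ = 1 / 2 := by
    rw [hκ₀]; unfold gfun
    field_simp
    linear_combination (-1) * hroot
  rcases eq_or_lt_of_le hu with rfl | hu0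
  · simp
  have key : (gfun w - w * gd w) * u ^ 2 + gd w * u ^ 3
      = u ^ 2 * (gfun w + gd w * (u - w)) := by ring
  rw [key]
  rcases lt_or_ge u θ with hcase | hcase
  · -- u < θ
    have hLθ : gfun w + gd w * (θ - w) ≤ gfun θ :=
      tangent_le θ hθ1 hθ2 hwmem ⟨le_refl θ, hθ2⟩
    have hgdθw : -κ₀ ≤ gd w := by
      rw [← hgdθ]
      exact gd_mono ⟨hθ1, hθ2⟩ ⟨le_trans hθ1 hw1, hw2⟩ hw1
    have hL : gfun w + gd w * (u - w) ≤ 1 / 2 - κ₀ * u := by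
      have : gfun w + gd w * (u - w) = (gfun w + gd w * (θ - w)) + gd w * (u - θ) := by ring
      rw [this]
      have h2 : gd w * (u - θ) ≤ κ₀ * (θ - u) := by nlinarith
      linarith
    have hK := Kf_le θ hθ1 hθ2 hroot hu0 hcase.le
    calc u ^ 2 * (gfun w + gd w * (u - w)) ≤ u ^ 2 * (1 / 2 - κ₀ * u) := by nlinarith
      _ ≤ 1 - Real.cos u := by rw [← hκ₀] at hK; nlinarith
  · rcases le_or_gt u (2 * π) with hcase2 | hcase2
    · -- θ ≤ u ≤ 2π
      have hL := tangent_le θ hθ1 hθ2 hwmem ⟨hcase, hcase2⟩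
      have : u ^ 2 * gfun u = 1 - Real.cos u := by
        unfold gfun; field_simp
      nlinarith
    · -- u > 2π
      have hL2π := tangent_le θ hθ1 hθ2 hwmem ⟨hθ2, le_refl _⟩
      have hg2π : gfun (2 * π) = 0 := by
        unfold gfun; rw [Real.cos_two_pi]; simp
      have hgd2 : gd w * (u - 2 * π) ≤ 0 :=
        mul_nonpos_of_nonpos_of_nonneg hgdw (by linarith)
      rw [hg2π] at hL2π
      have hL : gfun w + gd w * (u - w) ≤ 0 := by
        have e : gfun w + gd w * (u - w)
            = (gfun w + gd w * (2 * π - w)) + gd w * (u - 2 * π) := by ring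
        rw [e]; linarith
      have : u ^ 2 * (gfun w + gd w * (u - w)) ≤ 0 :=
        mul_nonpos_of_nonneg_of_nonpos (sq_nonneg u) hL
      linarith [Real.cos_le_one u]

end ThetaSection
end AnalysisFacts

section ProbFacts


section Prob
variable {μ : Measure ℝ} [IsProbabilityMeasure μ]

lemma cube_bound (x y : ℝ) :
    |x - y| ^ 3 ≤ |x| ^ 3 + |y| ^ 3 + |x| * y ^ 2 + x ^ 2 * |y|
      - 2 * (x * |x|) * y - 2 * x * (y * |y|) := by
  have h1 : |x - y| ≤ |x| + |y| := abs_sub x y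
  have h2 : |x - y| ^ 3 = |x - y| * (x - y) ^ 2 := by rw [← sq_abs]; ring
  have h3 : |x| * x ^ 2 = |x| ^ 3 := by rw [← sq_abs]; ring
  have h4 : |y| * y ^ 2 = |y| ^ 3 := by rw [← sq_abs]; ring
  have h5 := mul_le_mul_of_nonneg_right h1 (sq_nonneg (x - y))
  nlinarith [h5]

lemma sq_le_one_add_cube_abs (x : ℝ) : x ^ 2 ≤ 1 + |x| ^ 3 := by
  rcases le_or_gt (|x|) 1 with h | h
  · nlinarith [abs_nonneg x, sq_abs x]
  · nlinarith [abs_nonneg x, sq_abs x]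

lemma abs_le_one_add_cube_abs (x : ℝ) : |x| ≤ 1 + |x| ^ 3 := by
  rcases le_or_gt (|x|) 1 with h | h
  · nlinarith [abs_nonneg x, pow_nonneg (abs_nonneg x) 3]
  · nlinarith [abs_nonneg x, mul_nonneg (abs_nonneg x) (sq_nonneg (|x| - 1)),
      sq_nonneg (|x| - 1)]

variable (hint3 : Integrable (fun x => |x| ^ 3) μ)

include hint3 in
lemma int_sq : Integrable (fun x : ℝ => x ^ 2) μ := by
  refine ((integrable_const (1:ℝ)).add hint3).mono'
    ((continuous_pow 2).aestronglyMeasurable) ?_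
  filter_upwards with x
  rw [Real.norm_eq_abs, abs_of_nonneg (sq_nonneg x)]
  exact sq_le_one_add_cube_abs x

include hint3 in
lemma int_id : Integrable (fun x : ℝ => x) μ := by
  refine ((integrable_const (1:ℝ)).add hint3).mono'
    (continuous_id.aestronglyMeasurable) ?_
  filter_upwards with x
  rw [Real.norm_eq_abs]
  exact abs_le_one_add_cube_abs x

include hint3 in
lemma int_abs : Integrable (fun x : ℝ => |x|) μ := (int_id hint3).abs

include hint3 in
lemma int_mul_abs : Integrable (fun x : ℝ => x * |x|) μ := by
  refine (int_sq hint3).mono' (continuous_id.mul continuous_abs).aestronglyMeasurable ?_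
  filter_upwards with x
  simp only [Real.norm_eq_abs, abs_mul, abs_abs]
  exact le_of_eq (by rw [← sq_abs]; ring)

include hint3 in
lemma exp_abs_le_one (hvar : ∫ x, x ^ 2 ∂μ = 1) : ∫ x, |x| ∂μ ≤ 1 := by
  have h : ∫ x, |x| ∂μ ≤ ∫ x, (1 + x ^ 2) / 2 ∂μ := by
    refine integral_mono (int_abs hint3) ?_ ?_
    · exact (((integrable_const (1:ℝ)).add (int_sq hint3)).div_const 2)
    · intro x
      simp only
      nlinarith [sq_abs x, abs_nonneg x, sq_nonneg (|x| - 1)]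
  rw [integral_div, integral_add (integrable_const 1) (int_sq hint3), integral_const,
    probReal_univ, hvar] at h
  simpa using h

end Prob

section Prob2
variable {μ : Measure ℝ} [IsProbabilityMeasure μ]

lemma cube_crude (x y : ℝ) : |x - y| ^ 3 ≤ 4 * |x| ^ 3 + 4 * |y| ^ 3 := by
  have h1 : |x - y| ≤ |x| + |y| := abs_sub x y
  have h2 : |x - y| ^ 3 ≤ (|x| + |y|) ^ 3 := pow_le_pow_left₀ (abs_nonneg _) h1 3
  nlinarith [mul_nonneg (add_nonneg (abs_nonneg x) (abs_nonneg y)) (sq_nonneg (|x| - |y|))]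

set_option maxHeartbeats 1000000 in
lemma normsq_bound (hint3 : Integrable (fun x => |x| ^ 3) μ)
    (hmean : ∫ x, x ∂μ = 0) (hvar : ∫ x, x ^ 2 ∂μ = 1)
    (b c s : ℝ) (hc : c ≤ 0)
    (hpt : ∀ u : ℝ, 0 ≤ u → b * u ^ 2 + c * u ^ 3 ≤ 1 - Real.cos u) :
    ‖∫ x, Complex.exp (Complex.I * s * x) ∂μ‖ ^ 2
      ≤ 1 - (2 * b * s ^ 2 + 2 * c * ((∫ x, |x| ^ 3 ∂μ) + 1) * |s| ^ 3) := by
  set β := ∫ x, |x| ^ 3 ∂μ with hβ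
  set A := ∫ x, |x| ∂μ with hA
  set C := ∫ x, Real.cos (s * x) ∂μ with hC
  set S := ∫ x, Real.sin (s * x) ∂μ with hS
  have hIcos : Integrable (fun x => Real.cos (s * x)) μ := by
    refine (integrable_const (1:ℝ)).mono'
      ((Real.continuous_cos.comp (continuous_const.mul continuous_id)).aestronglyMeasurable) ?_
    filter_upwards with x
    rw [Real.norm_eq_abs]; exact Real.abs_cos_le_one _
  have hIsin : Integrable (fun x => Real.sin (s * x)) μ := by
    refine (integrable_const (1:ℝ)).mono'
      ((Real.continuous_sin.comp (continuous_const.mul continuous_id)).aestronglyMeasurable) ?_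
    filter_upwards with x
    rw [Real.norm_eq_abs]; exact Real.abs_sin_le_one _
  have hIexp : Integrable (fun x : ℝ => Complex.exp (Complex.I * s * x)) μ := by
    refine (integrable_const (1:ℝ)).mono' ?_ ?_
    · exact (Complex.continuous_exp.comp
        (continuous_const.mul Complex.continuous_ofReal)).aestronglyMeasurable
    · filter_upwards with x
      rw [Complex.norm_exp]
      simp
  have hRe : (∫ x, Complex.exp (Complex.I * s * x) ∂μ).re = C := by
    have h := integral_re (𝕜 := ℂ) hIexp
    simp only [RCLike.re_to_complex] at h
    rw [← h, hC]
    congr 1; funext x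
    simp [Complex.exp_re, Complex.mul_re, Complex.mul_im]
  have hIm : (∫ x, Complex.exp (Complex.I * s * x) ∂μ).im = S := by
    have h := integral_im (𝕜 := ℂ) hIexp
    simp only [RCLike.im_to_complex] at h
    rw [← h, hS]
    congr 1; funext x
    simp [Complex.exp_im, Complex.mul_re, Complex.mul_im]
  have hnorm : ‖∫ x, Complex.exp (Complex.I * s * x) ∂μ‖ ^ 2 = C ^ 2 + S ^ 2 := by
    rw [Complex.sq_norm, Complex.normSq_apply, hRe, hIm]
    ring
  -- product representation
  have t1 : ∫ p : ℝ × ℝ, Real.cos (s * p.1) * Real.cos (s * p.2) ∂(μ.prod μ)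
      = (∫ x, Real.cos (s * x) ∂μ) * (∫ x, Real.cos (s * x) ∂μ) := by
    simpa using integral_prod_mul (μ := μ) (ν := μ)
      (fun x => Real.cos (s * x)) (fun x => Real.cos (s * x))
  have t2 : ∫ p : ℝ × ℝ, Real.sin (s * p.1) * Real.sin (s * p.2) ∂(μ.prod μ)
      = (∫ x, Real.sin (s * x) ∂μ) * (∫ x, Real.sin (s * x) ∂μ) := by
    simpa using integral_prod_mul (μ := μ) (ν := μ)
      (fun x => Real.sin (s * x)) (fun x => Real.sin (s * x))
  have icc : Integrable (fun p : ℝ × ℝ => Real.cos (s * p.1) * Real.cos (s * p.2)) (μ.prod μ) :=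
    hIcos.mul_prod hIcos
  have iss : Integrable (fun p : ℝ × ℝ => Real.sin (s * p.1) * Real.sin (s * p.2)) (μ.prod μ) :=
    hIsin.mul_prod hIsin
  have hprod : C ^ 2 + S ^ 2 = ∫ p : ℝ × ℝ, Real.cos (s * (p.1 - p.2)) ∂(μ.prod μ) := by
    have e : ∀ p : ℝ × ℝ, Real.cos (s * (p.1 - p.2))
        = Real.cos (s * p.1) * Real.cos (s * p.2) + Real.sin (s * p.1) * Real.sin (s * p.2) := by
      intro p; rw [mul_sub, Real.cos_sub]
    simp only [e]
    rw [integral_add icc iss, t1, t2, ← hC, ← hS]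
    ring
  -- integrabilities on the product
  have hI1 : Integrable (fun p : ℝ × ℝ => Real.cos (s * (p.1 - p.2))) (μ.prod μ) := by
    refine (integrable_const (1:ℝ)).mono'
      ((Real.continuous_cos.comp (continuous_const.mul
        (continuous_fst.sub continuous_snd))).aestronglyMeasurable) ?_
    filter_upwards with p
    rw [Real.norm_eq_abs]; exact Real.abs_cos_le_one _
  have i1 : Integrable (fun p : ℝ × ℝ => p.1 ^ 2) (μ.prod μ) := by
    simpa using (int_sq hint3).mul_prod (integrable_const (1:ℝ))
  have i3 : Integrable (fun p : ℝ × ℝ => p.2 ^ 2) (μ.prod μ) := by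
    simpa using (integrable_const (1:ℝ)).mul_prod (int_sq hint3)
  have i2 : Integrable (fun p : ℝ × ℝ => p.1 * p.2) (μ.prod μ) :=
    (int_id hint3).mul_prod (int_id hint3)
  have i2' : Integrable (fun p : ℝ × ℝ => 2 * (p.1 * p.2)) (μ.prod μ) := i2.const_mul 2
  have i12 : Integrable (fun p : ℝ × ℝ => p.1 ^ 2 - 2 * (p.1 * p.2)) (μ.prod μ) := i1.sub i2'
  have esq : (fun p : ℝ × ℝ => (p.1 - p.2) ^ 2)
      = fun p : ℝ × ℝ => p.1 ^ 2 - 2 * (p.1 * p.2) + p.2 ^ 2 := by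
    funext p; ring
  have hIsq2 : Integrable (fun p : ℝ × ℝ => (p.1 - p.2) ^ 2) (μ.prod μ) := by
    rw [esq]; exact i12.add i3
  have e1 : ∫ p : ℝ × ℝ, p.1 ^ 2 ∂(μ.prod μ) = 1 := by
    have := integral_prod_mul (μ := μ) (ν := μ) (fun x : ℝ => x ^ 2) (fun _ : ℝ => (1:ℝ))
    simpa [hvar] using this
  have e3 : ∫ p : ℝ × ℝ, p.2 ^ 2 ∂(μ.prod μ) = 1 := by
    have := integral_prod_mul (μ := μ) (ν := μ) (fun _ : ℝ => (1:ℝ)) (fun x : ℝ => x ^ 2)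
    simpa [hvar] using this
  have e2 : ∫ p : ℝ × ℝ, p.1 * p.2 ∂(μ.prod μ) = 0 := by
    have := integral_prod_mul (μ := μ) (ν := μ) (fun x : ℝ => x) (fun x : ℝ => x)
    simpa [hmean] using this
  have E2 : ∫ p : ℝ × ℝ, (p.1 - p.2) ^ 2 ∂(μ.prod μ) = 2 := by
    rw [esq, integral_add i12 i3, integral_sub i1 i2', integral_const_mul, e1, e2, e3]
    norm_num
  -- third absolute moment of the difference
  have iA : Integrable (fun p : ℝ × ℝ => |p.1| ^ 3) (μ.prod μ) := by
    simpa using hint3.mul_prod (integrable_const (1:ℝ))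
  have iB : Integrable (fun p : ℝ × ℝ => |p.2| ^ 3) (μ.prod μ) := by
    simpa using (integrable_const (1:ℝ)).mul_prod hint3
  have hJint : Integrable (fun p : ℝ × ℝ => |p.1 - p.2| ^ 3) (μ.prod μ) := by
    have ib : Integrable (fun p : ℝ × ℝ => 4 * |p.1| ^ 3 + 4 * |p.2| ^ 3) (μ.prod μ) :=
      (iA.const_mul 4).add (iB.const_mul 4)
    refine ib.mono'
      (((continuous_abs.comp (continuous_fst.sub continuous_snd)).pow 3).aestronglyMeasurable) ?_
    filter_upwards with p
    rw [Real.norm_eq_abs, abs_of_nonneg (by positivity)]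
    exact cube_crude p.1 p.2
  have iC : Integrable (fun p : ℝ × ℝ => |p.1| * p.2 ^ 2) (μ.prod μ) :=
    (int_abs hint3).mul_prod (int_sq hint3)
  have iD : Integrable (fun p : ℝ × ℝ => p.1 ^ 2 * |p.2|) (μ.prod μ) :=
    (int_sq hint3).mul_prod (int_abs hint3)
  have iE : Integrable (fun p : ℝ × ℝ => p.1 * |p.1| * p.2) (μ.prod μ) :=
    (int_mul_abs hint3).mul_prod (int_id hint3)
  have iF : Integrable (fun p : ℝ × ℝ => p.1 * (p.2 * |p.2|)) (μ.prod μ) :=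
    (int_id hint3).mul_prod (int_mul_abs hint3)
  have g1 : Integrable (fun p : ℝ × ℝ => |p.1| ^ 3 + |p.2| ^ 3) (μ.prod μ) := iA.add iB
  have g2 : Integrable (fun p : ℝ × ℝ => |p.1| ^ 3 + |p.2| ^ 3 + |p.1| * p.2 ^ 2) (μ.prod μ) :=
    g1.add iC
  have g3 : Integrable (fun p : ℝ × ℝ =>
      |p.1| ^ 3 + |p.2| ^ 3 + |p.1| * p.2 ^ 2 + p.1 ^ 2 * |p.2|) (μ.prod μ) := g2.add iD
  have g4 : Integrable (fun p : ℝ × ℝ => 2 * (p.1 * |p.1| * p.2)) (μ.prod μ) := iE.const_mul 2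
  have g5 : Integrable (fun p : ℝ × ℝ =>
      |p.1| ^ 3 + |p.2| ^ 3 + |p.1| * p.2 ^ 2 + p.1 ^ 2 * |p.2|
        - 2 * (p.1 * |p.1| * p.2)) (μ.prod μ) := g3.sub g4
  have g6 : Integrable (fun p : ℝ × ℝ => 2 * (p.1 * (p.2 * |p.2|))) (μ.prod μ) := iF.const_mul 2
  have eA : ∫ p : ℝ × ℝ, |p.1| ^ 3 ∂(μ.prod μ) = β := by
    have := integral_prod_mul (μ := μ) (ν := μ) (fun x : ℝ => |x| ^ 3) (fun _ : ℝ => (1:ℝ))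
    simpa [← hβ] using this
  have eB : ∫ p : ℝ × ℝ, |p.2| ^ 3 ∂(μ.prod μ) = β := by
    have := integral_prod_mul (μ := μ) (ν := μ) (fun _ : ℝ => (1:ℝ)) (fun x : ℝ => |x| ^ 3)
    simpa [← hβ] using this
  have eC : ∫ p : ℝ × ℝ, |p.1| * p.2 ^ 2 ∂(μ.prod μ) = A := by
    have := integral_prod_mul (μ := μ) (ν := μ) (fun x : ℝ => |x|) (fun x : ℝ => x ^ 2)
    simpa [hvar, ← hA] using this
  have eD : ∫ p : ℝ × ℝ, p.1 ^ 2 * |p.2| ∂(μ.prod μ) = A := by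
    have := integral_prod_mul (μ := μ) (ν := μ) (fun x : ℝ => x ^ 2) (fun x : ℝ => |x|)
    simpa [hvar, ← hA] using this
  have eE : ∫ p : ℝ × ℝ, p.1 * |p.1| * p.2 ∂(μ.prod μ) = 0 := by
    have := integral_prod_mul (μ := μ) (ν := μ) (fun x : ℝ => x * |x|) (fun x : ℝ => x)
    simpa [hmean] using this
  have eF : ∫ p : ℝ × ℝ, p.1 * (p.2 * |p.2|) ∂(μ.prod μ) = 0 := by
    have := integral_prod_mul (μ := μ) (ν := μ) (fun x : ℝ => x) (fun x : ℝ => x * |x|)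
    simpa [hmean] using this
  have hJle : ∫ p : ℝ × ℝ, |p.1 - p.2| ^ 3 ∂(μ.prod μ) ≤ 2 * β + 2 * A := by
    have hmono : ∫ p : ℝ × ℝ, |p.1 - p.2| ^ 3 ∂(μ.prod μ)
        ≤ ∫ p : ℝ × ℝ, (|p.1| ^ 3 + |p.2| ^ 3 + |p.1| * p.2 ^ 2 + p.1 ^ 2 * |p.2|
            - 2 * (p.1 * |p.1| * p.2) - 2 * (p.1 * (p.2 * |p.2|))) ∂(μ.prod μ) := by
      refine integral_mono hJint (g5.sub g6) ?_
      intro p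
      have h := cube_bound p.1 p.2
      simp only
      nlinarith [h]
    rw [integral_sub g5 g6, integral_sub g3 g4, integral_add g2 iD, integral_add g1 iC,
      integral_add iA iB, integral_const_mul, integral_const_mul,
      eA, eB, eC, eD, eE, eF] at hmono
    linarith
  -- pointwise minorant integrated
  have hmain : 2 * b * s ^ 2 + 2 * c * (β + 1) * |s| ^ 3 ≤ 1 - (C ^ 2 + S ^ 2) := by
    have hq : Integrable (fun p : ℝ × ℝ => b * s ^ 2 * (p.1 - p.2) ^ 2) (μ.prod μ) :=
      hIsq2.const_mul (b * s ^ 2)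
    have hr : Integrable (fun p : ℝ × ℝ => c * |s| ^ 3 * |p.1 - p.2| ^ 3) (μ.prod μ) :=
      hJint.const_mul (c * |s| ^ 3)
    have hqr : Integrable (fun p : ℝ × ℝ =>
        b * s ^ 2 * (p.1 - p.2) ^ 2 + c * |s| ^ 3 * |p.1 - p.2| ^ 3) (μ.prod μ) := hq.add hr
    have hs1 : Integrable (fun p : ℝ × ℝ => 1 - Real.cos (s * (p.1 - p.2))) (μ.prod μ) :=
      (integrable_const 1).sub hI1
    have hkey : ∫ p : ℝ × ℝ,
        (b * s ^ 2 * (p.1 - p.2) ^ 2 + c * |s| ^ 3 * |p.1 - p.2| ^ 3) ∂(μ.prod μ)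
        ≤ ∫ p : ℝ × ℝ, (1 - Real.cos (s * (p.1 - p.2))) ∂(μ.prod μ) := by
      refine integral_mono hqr hs1 ?_
      intro p
      have h := hpt |s * (p.1 - p.2)| (abs_nonneg _)
      rw [Real.cos_abs] at h
      have ea : |s * (p.1 - p.2)| ^ 2 = s ^ 2 * (p.1 - p.2) ^ 2 := by
        rw [sq_abs]; ring
      have eb : |s * (p.1 - p.2)| ^ 3 = |s| ^ 3 * |p.1 - p.2| ^ 3 := by
        rw [abs_mul, mul_pow]
      rw [ea, eb] at h
      simp only
      nlinarith [h]
    rw [integral_add hq hr, integral_const_mul, integral_const_mul, E2,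
      integral_sub (integrable_const 1) hI1, integral_const, probReal_univ, ← hprod] at hkey
    
    have hcs : c * |s| ^ 3 ≤ 0 := mul_nonpos_of_nonpos_of_nonneg hc (by positivity)
    have hA1 : A ≤ 1 := exp_abs_le_one hint3 hvar
    have h2 : c * |s| ^ 3 * (2 * β + 2)
        ≤ c * |s| ^ 3 * (∫ p : ℝ × ℝ, |p.1 - p.2| ^ 3 ∂(μ.prod μ)) := by
      apply mul_le_mul_of_nonpos_left _ hcs
      linarith
    simp only [ENNReal.toReal_one, smul_eq_mul, mul_one] at hkey
    nlinarith [hkey, h2]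
  rw [hnorm]
  linarith [hmain]

end Prob2

end ProbFacts

/-- Second estimate of Lemma 2: for a distribution with zero mean, unit variance and third
absolute moment `β³`, with `ℓ_n = β³/√n + 1/√n`, the characteristic function `f_n` of the
normalized `n`-fold sum satisfies `|f_n(t)| ≤ exp{−χ(t, ℓ_n)}`. -/
theorem charFun_bound_f2 (μ : Measure ℝ) [IsProbabilityMeasure μ]
    (hmean : ∫ x, x ∂μ = 0) (hvar : ∫ x, x ^ 2 ∂μ = 1)
    (hint3 : Integrable (fun x => |x| ^ 3) μ)
    (β3 : ℝ) (hβ3 : β3 = ∫ x, |x| ^ 3 ∂μ)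
    (f : ℝ → ℂ) (hf : ∀ t : ℝ, f t = ∫ x, Complex.exp (Complex.I * t * x) ∂μ)
    (θ₀ : ℝ) (hθ₀mem : θ₀ ∈ Set.Icc Real.pi (2 * Real.pi))
    (hθ₀root : θ₀ ^ 2 + 2 * θ₀ * Real.sin θ₀ + 6 * (Real.cos θ₀ - 1) = 0)
    (n : ℕ) (hn : 1 ≤ n) (t : ℝ) :
    ‖(f (t / Real.sqrt n)) ^ n‖ ≤
      Real.exp (-chi θ₀ kappa t (β3 / Real.sqrt n + 1 / Real.sqrt n)) := by
  have hn0 : (0:ℝ) < (n:ℝ) := by exact_mod_cast Nat.lt_of_lt_of_le Nat.zero_lt_one hn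
  have hrn : (0:ℝ) < Real.sqrt n := Real.sqrt_pos.mpr hn0
  have hrn2 : (Real.sqrt n) ^ 2 = (n:ℝ) := Real.sq_sqrt hn0.le
  have hβ0 : 0 ≤ β3 := by
    rw [hβ3]; exact integral_nonneg (fun x => by positivity)
  set rn := Real.sqrt n with hrn_def
  set ε := β3 / rn + 1 / rn with hε
  have hε' : ε = (β3 + 1) / rn := by rw [hε]; ring
  have hεpos : 0 < ε := by rw [hε']; positivity
  set s := t / rn with hs
  have hs2 : (n:ℝ) * s ^ 2 = t ^ 2 := by
    rw [hs, ← hrn2]; field_simp [hrn.ne']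
  have hs3 : (n:ℝ) * (β3 + 1) * |s| ^ 3 = ε * |t| ^ 3 := by
    rw [hs, hε', abs_div, abs_of_pos hrn, ← hrn2]
    field_simp [hrn.ne']
  -- master bound
  have master : ∀ b c : ℝ, c ≤ 0 → (∀ u : ℝ, 0 ≤ u → b * u ^ 2 + c * u ^ 3 ≤ 1 - Real.cos u) →
      ‖(f s) ^ n‖ ≤ Real.exp (-((n:ℝ) * (b * s ^ 2 + c * (β3 + 1) * |s| ^ 3))) := by
    intro b c hc hpt
    have h1 := normsq_bound (μ := μ) hint3 hmean hvar b c s hc hpt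
    rw [← hβ3] at h1
    set D := 2 * b * s ^ 2 + 2 * c * (β3 + 1) * |s| ^ 3 with hD
    have h2 : ‖f s‖ ^ 2 ≤ Real.exp (-D) := by
      rw [hf s]
      refine le_trans h1 ?_
      linarith [Real.add_one_le_exp (-D)]
    have h3 : ‖f s‖ ≤ Real.exp (-D / 2) := by
      have hnn : (0:ℝ) ≤ ‖f s‖ := norm_nonneg _
      have hEe : Real.exp (-D / 2) ^ 2 = Real.exp (-D) := by
        rw [← Real.exp_nat_mul]; congr 1; push_cast; ring
      nlinarith [Real.exp_pos (-D / 2), h2]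
    rw [norm_pow]
    calc ‖f s‖ ^ n ≤ (Real.exp (-D / 2)) ^ n := pow_le_pow_left₀ (norm_nonneg _) h3 n
      _ = Real.exp (-((n:ℝ) * (b * s ^ 2 + c * (β3 + 1) * |s| ^ 3))) := by
          rw [← Real.exp_nat_mul]; congr 1; rw [hD]; ring
  rw [chi]
  split_ifs with hc1 hc2
  · -- |t| ≤ θ₀/ε : quadratic-cubic regime
    refine le_trans (master (1/2) (-kappa) (neg_nonpos.mpr kappa_nonneg) ?_) ?_
    · intro u hu
      have := kappa_ineq hu
      nlinarith
    · apply le_of_eq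
      congr 1
      have e1 : (n:ℝ) * (1 / 2 * s ^ 2 + -kappa * (β3 + 1) * |s| ^ 3)
          = t ^ 2 / 2 - kappa * (ε * |t| ^ 3) := by
        have : (n:ℝ) * (1 / 2 * s ^ 2 + -kappa * (β3 + 1) * |s| ^ 3)
            = ((n:ℝ) * s ^ 2) / 2 - kappa * ((n:ℝ) * (β3 + 1) * |s| ^ 3) := by ring
        rw [this, hs2, hs3]
      rw [e1]; ring
  · -- θ₀ < ε|t| ≤ 2π : trigonometric regime
    have hπθ : Real.pi ≤ θ₀ := hθ₀mem.1
    have hθ2π : θ₀ ≤ 2 * Real.pi := hθ₀mem.2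
    set w := ε * |t| with hw
    have hwθ : θ₀ < w := by
      rw [hw]
      rw [not_le, div_lt_iff₀ hεpos] at hc1
      linarith [hc1]
    have hw2π : w ≤ 2 * Real.pi := hc2
    have hπw : Real.pi ≤ w := le_trans hπθ hwθ.le
    have hwpos : 0 < w := lt_of_lt_of_le Real.pi_pos hπw
    have htpos : 0 < |t| := by
      rcases (abs_nonneg t).lt_or_eq with h | h
      · exact h
      · exfalso; rw [hw, ← h, mul_zero] at hwpos; exact lt_irrefl 0 hwpos
    have hcgd : gd w ≤ 0 := gd_nonpos hπw hw2π
    refine le_trans (master (gfun w - w * gd w) (gd w) hcgd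
      (fun u hu => family θ₀ hπθ hθ2π hθ₀root hwθ.le hw2π hu)) ?_
    apply le_of_eq
    congr 1
    have e1 : (n:ℝ) * ((gfun w - w * gd w) * s ^ 2 + gd w * (β3 + 1) * |s| ^ 3)
        = (gfun w - w * gd w) * t ^ 2 + gd w * (ε * |t| ^ 3) := by
      have : (n:ℝ) * ((gfun w - w * gd w) * s ^ 2 + gd w * (β3 + 1) * |s| ^ 3)
          = (gfun w - w * gd w) * ((n:ℝ) * s ^ 2) + gd w * ((n:ℝ) * (β3 + 1) * |s| ^ 3) := by
        ring
      rw [this, hs2, hs3]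
    have hcos : Real.cos (ε * t) = Real.cos w := by
      rw [hw, ← Real.cos_abs (ε * t), abs_mul, abs_of_pos hεpos]
    have ht2 : t ^ 2 = |t| ^ 2 := (sq_abs t).symm
    have hεX : ε * |t| ^ 3 = w * |t| ^ 2 := by rw [hw]; ring
    have e2 : (gfun w - w * gd w) * t ^ 2 + gd w * (ε * |t| ^ 3)
        = gfun w * |t| ^ 2 := by
      rw [ht2, hεX]; ring
    rw [e1, hcos, e2, gfun, hw, div_mul_eq_mul_div, neg_inj,
      div_eq_div_iff (by positivity) (by positivity)]
    ring
  · -- |t| > 2π/ε : trivial regime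
    have hb : ‖f s‖ ≤ 1 := by
      rw [hf s]
      calc ‖∫ x, Complex.exp (Complex.I * s * x) ∂μ‖
          ≤ ∫ x, ‖Complex.exp (Complex.I * s * x)‖ ∂μ := norm_integral_le_integral_norm _
        _ = 1 := by
            have : ∀ x : ℝ, ‖Complex.exp (Complex.I * s * x)‖ = 1 := by
              intro x
              rw [Complex.norm_exp]
              simp [Complex.mul_re]
            simp only [this]
            simp
    rw [norm_pow, neg_zero, Real.exp_zero]
    exact pow_le_one₀ (norm_nonneg _) hb
end

section
/- Let X₁ have distribution function F with E X₁ = 0, E X₁² = 1, β³ = E|X₁|³ < ∞, let f be its characteristic function, f_n(t) = (f(t/√n))ⁿ, ℓ_n = β³/√n + 1/√n. Then for every n ≥ 1 and every t ∈ ℝ: |f_n(t)| ≤ exp{−t²/2 + κ ℓ_n |t|³}, where κ = sup_{x>0} |cos x − 1 + x²/2|/x³ = 0.09916191…. -/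
open MeasureTheory ProbabilityTheory

lemma kappa_ratio_le (x : ℝ) (hx : 0 < x) : |Real.cos x - 1 + x ^ 2 / 2| ≤ kappa * x ^ 3 := by
  have hbdd : BddAbove (Set.range fun x : Set.Ioi (0 : ℝ) =>
      |Real.cos x - 1 + (x : ℝ) ^ 2 / 2| / (x : ℝ) ^ 3) := by
    refine ⟨3, ?_⟩
    rintro _ ⟨⟨y, hy⟩, rfl⟩
    have hy' : (0:ℝ) < y := hy
    simp only
    rw [div_le_iff₀ (by positivity)]
    rcases le_or_gt y 1 with h | h
    · have hb := Real.cos_bound (by rw [abs_of_pos hy']; exact h)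
      have hb' : |Real.cos y - 1 + y ^ 2 / 2| ≤ |y| ^ 4 * (5 / 96) := by
        have : Real.cos y - 1 + y ^ 2 / 2 = Real.cos y - (1 - y ^ 2 / 2) := by ring
        rw [this]; exact hb
      rw [abs_of_pos hy'] at hb'
      nlinarith [pow_pos hy' 3, pow_pos hy' 4]
    · have h1 := Real.cos_le_one y
      have h2 := Real.neg_one_le_cos y
      rw [abs_le]
      constructor <;> nlinarith [pow_pos hy' 3, sq_nonneg y, sq_nonneg (y-1)]
  have h := le_ciSup hbdd (⟨x, hx⟩ : Set.Ioi (0:ℝ))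
  rw [div_le_iff₀ (pow_pos hx 3)] at h
  exact h

lemma cos_le_quad (u : ℝ) : Real.cos u ≤ 1 - u ^ 2 / 2 + kappa * |u| ^ 3 := by
  rcases eq_or_ne u 0 with rfl | h
  · simp
  · have h0 : 0 < |u| := abs_pos.2 h
    have h1 := kappa_ratio_le |u| h0
    have h2 : Real.cos u = Real.cos |u| := (Real.cos_abs u).symm
    have h3 := le_abs_self (Real.cos |u| - 1 + |u| ^ 2 / 2)
    have h4 : |u| ^ 2 = u ^ 2 := sq_abs u
    linarith

set_option maxHeartbeats 1000000 in
/-- Third estimate of Lemma 2: for a distribution with zero mean, unit variance and third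
absolute moment `β³`, with `ℓ_n = β³/√n + 1/√n`, the characteristic function `f_n` of the
normalized `n`-fold sum satisfies `|f_n(t)| ≤ exp{−t²/2 + κ ℓ_n |t|³}`. -/
theorem charFun_bound_f3 (μ : Measure ℝ) [IsProbabilityMeasure μ]
    (hmean : ∫ x, x ∂μ = 0) (hvar : ∫ x, x ^ 2 ∂μ = 1)
    (hint3 : Integrable (fun x => |x| ^ 3) μ)
    (β3 : ℝ) (hβ3 : β3 = ∫ x, |x| ^ 3 ∂μ)
    (f : ℝ → ℂ) (hf : ∀ t : ℝ, f t = ∫ x, Complex.exp (Complex.I * t * x) ∂μ)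
    (n : ℕ) (hn : 1 ≤ n) (t : ℝ) :
    ‖(f (t / Real.sqrt n)) ^ n‖ ≤
      Real.exp (-t ^ 2 / 2 + kappa * (β3 / Real.sqrt n + 1 / Real.sqrt n) * |t| ^ 3) := by
  have hnpos : (0:ℝ) < n := by exact_mod_cast Nat.lt_of_lt_of_le Nat.zero_lt_one hn
  obtain ⟨r, hrpos, hrn, hreq⟩ : ∃ r : ℝ, 0 < r ∧ (n:ℝ) = r ^ 2 ∧ Real.sqrt n = r :=
    ⟨Real.sqrt n, Real.sqrt_pos.2 hnpos, (Real.sq_sqrt hnpos.le).symm, rfl⟩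
  rw [hreq]
  set s : ℝ := t / r with hs
  -- basic integrability facts
  have hb : Integrable (fun x : ℝ => 1 + |x| ^ 3) μ := (integrable_const 1).add hint3
  have cube_ge : ∀ x : ℝ, |x| ^ 2 ≤ 1 + |x| ^ 3 ∧ |x| ≤ 1 + |x| ^ 3 := by
    intro x
    constructor <;>
      nlinarith [abs_nonneg x, sq_nonneg (|x| - 1),
        mul_nonneg (sq_nonneg (|x| - 1)) (abs_nonneg x),
        mul_nonneg (sq_nonneg (|x| - 1)) (by positivity : (0:ℝ) ≤ |x| + 1)]
  have hi2 : Integrable (fun x : ℝ => x ^ 2) μ := by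
    refine hb.mono' (continuous_pow 2).aestronglyMeasurable (ae_of_all _ fun x => ?_)
    rw [Real.norm_eq_abs, abs_of_nonneg (sq_nonneg x), ← sq_abs x]
    exact (cube_ge x).1
  have hiabs : Integrable (fun x : ℝ => |x|) μ := by
    refine hb.mono' continuous_abs.aestronglyMeasurable (ae_of_all _ fun x => ?_)
    rw [Real.norm_eq_abs, abs_abs]
    exact (cube_ge x).2
  have hi1 : Integrable (fun x : ℝ => x) μ := by
    refine hb.mono' continuous_id.aestronglyMeasurable (ae_of_all _ fun x => ?_)
    rw [Real.norm_eq_abs]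
    exact (cube_ge x).2
  have hixa : Integrable (fun x : ℝ => x * |x|) μ := by
    refine hb.mono' (continuous_id.mul continuous_abs).aestronglyMeasurable
      (ae_of_all _ fun x => ?_)
    rw [Real.norm_eq_abs, abs_mul, abs_abs, ← sq]
    exact (cube_ge x).1
  have hbd : ∀ g : ℝ → ℝ, Continuous g → (∀ x, |g x| ≤ 1) → Integrable g μ := fun g hc hb' =>
    (integrable_const (1:ℝ)).mono' hc.aestronglyMeasurable
      (ae_of_all _ fun x => by simpa [Real.norm_eq_abs] using hb' x)
  have hicos : Integrable (fun x : ℝ => Real.cos (s * x)) μ :=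
    hbd _ (by fun_prop) (fun x => Real.abs_cos_le_one _)
  have hisin : Integrable (fun x : ℝ => Real.sin (s * x)) μ :=
    hbd _ (by fun_prop) (fun x => Real.abs_sin_le_one _)
  -- the polynomial integral helper
  have hP : ∀ c0 c1 c2 c3 c4 c5 : ℝ,
      Integrable (fun y : ℝ => c0 + c1 * y + c2 * y ^ 2 + c3 * |y| + c4 * (y * |y|) + c5 * |y| ^ 3) μ ∧
      ∫ y, (c0 + c1 * y + c2 * y ^ 2 + c3 * |y| + c4 * (y * |y|) + c5 * |y| ^ 3) ∂μ
        = c0 + c2 + c3 * (∫ x, |x| ∂μ) + c4 * (∫ x, x * |x| ∂μ) + c5 * β3 := by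
    intro c0 c1 c2 c3 c4 c5
    have J0 : Integrable (fun _ : ℝ => c0) μ := integrable_const c0
    have J1 : Integrable (fun y : ℝ => c0 + c1 * y) μ := J0.add (hi1.const_mul c1)
    have J2 : Integrable (fun y : ℝ => c0 + c1 * y + c2 * y ^ 2) μ := J1.add (hi2.const_mul c2)
    have J3 : Integrable (fun y : ℝ => c0 + c1 * y + c2 * y ^ 2 + c3 * |y|) μ :=
      J2.add (hiabs.const_mul c3)
    have J4 : Integrable (fun y : ℝ => c0 + c1 * y + c2 * y ^ 2 + c3 * |y| + c4 * (y * |y|)) μ :=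
      J3.add (hixa.const_mul c4)
    have J5 : Integrable (fun y : ℝ => c0 + c1 * y + c2 * y ^ 2 + c3 * |y| + c4 * (y * |y|)
        + c5 * |y| ^ 3) μ := J4.add (hint3.const_mul c5)
    refine ⟨J5, ?_⟩
    rw [integral_add J4 (hint3.const_mul c5), integral_add J3 (hixa.const_mul c4),
        integral_add J2 (hiabs.const_mul c3), integral_add J1 (hi2.const_mul c2),
        integral_add J0 (hi1.const_mul c1),
        integral_const_mul, integral_const_mul, integral_const_mul, integral_const_mul,
        integral_const_mul, hmean, hvar, ← hβ3, integral_const]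
    simp only [measure_univ, probReal_univ, ENNReal.toReal_one, smul_eq_mul, one_mul, mul_zero, mul_one]
    ring
  -- trig integral helper
  have hT : ∀ a b : ℝ, ∫ x, (a * Real.cos (s * x) + b * Real.sin (s * x)) ∂μ
      = a * (∫ x, Real.cos (s * x) ∂μ) + b * (∫ x, Real.sin (s * x) ∂μ) := by
    intro a b
    rw [integral_add (hicos.const_mul a) (hisin.const_mul b), integral_const_mul,
      integral_const_mul]
  set A := ∫ x, Real.cos (s * x) ∂μ with hA
  set B := ∫ x, Real.sin (s * x) ∂μ with hB
  -- step 1 : ‖f s‖² = A² + B²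
  have hfeq : f s = (A : ℂ) + (B : ℂ) * Complex.I := by
    rw [hf]
    have h1 : ∀ x : ℝ, Complex.exp (Complex.I * s * x)
        = ((Real.cos (s * x) : ℝ) : ℂ) + ((Real.sin (s * x) : ℝ) : ℂ) * Complex.I := by
      intro x
      rw [show Complex.I * (s:ℂ) * (x:ℂ) = ((s * x : ℝ) : ℂ) * Complex.I by push_cast; ring,
        Complex.exp_mul_I, Complex.ofReal_cos, Complex.ofReal_sin]
    have hc1 : Integrable (fun x : ℝ => ((Real.cos (s * x) : ℝ) : ℂ)) μ := hicos.ofReal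
    have hc2 : Integrable (fun x : ℝ => ((Real.sin (s * x) : ℝ) : ℂ) * Complex.I) μ :=
      hisin.ofReal.mul_const _
    have e1 : ∫ x, (((Real.cos (s * x) : ℝ) : ℂ) + ((Real.sin (s * x) : ℝ) : ℂ) * Complex.I) ∂μ
        = (∫ x, ((Real.cos (s * x) : ℝ) : ℂ) ∂μ)
          + ∫ x, ((Real.sin (s * x) : ℝ) : ℂ) * Complex.I ∂μ := integral_add hc1 hc2
    have e2 : ∫ x, ((Real.sin (s * x) : ℝ) : ℂ) * Complex.I ∂μ
        = (∫ x, ((Real.sin (s * x) : ℝ) : ℂ) ∂μ) * Complex.I := integral_mul_const _ _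
    have e3 : (∫ x, ((Real.cos (s * x) : ℝ) : ℂ) ∂μ) = ((A : ℝ) : ℂ) := by
      rw [hA]; exact integral_ofReal
    have e4 : (∫ x, ((Real.sin (s * x) : ℝ) : ℂ) ∂μ) = ((B : ℝ) : ℂ) := by
      rw [hB]; exact integral_ofReal
    simp only [h1]
    rw [e1, e2, e3, e4]
  have hfs2 : ‖f s‖ ^ 2 = A ^ 2 + B ^ 2 := by
    rw [hfeq, Complex.norm_add_mul_I, Real.sq_sqrt (by positivity)]
  set m1 := ∫ x, |x| ∂μ with hm1
  set m2 := ∫ x, x * |x| ∂μ with hm2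
  set K := kappa * |s| ^ 3 with hK
  have hK0 : 0 ≤ K := mul_nonneg kappa_nonneg (by positivity)
  -- key pointwise bound after inner integration
  have key : ∀ x : ℝ, A * Real.cos (s * x) + B * Real.sin (s * x)
      ≤ (1 - s ^ 2 / 2 + K * β3) + (-2 * K * m2) * x + (-s ^ 2 / 2 + K * m1) * x ^ 2
        + K * |x| + 0 * (x * |x|) + K * |x| ^ 3 := by
    intro x
    have e1 : ∫ y, Real.cos (s * x - s * y) ∂μ
        = Real.cos (s * x) * A + Real.sin (s * x) * B := by
      simp only [Real.cos_sub]
      exact hT _ _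
    have hicsub : Integrable (fun y : ℝ => Real.cos (s * x - s * y)) μ :=
      hbd _ (by fun_prop) (fun y => Real.abs_cos_le_one _)
    have hpt : ∀ y : ℝ, Real.cos (s * x - s * y)
        ≤ (1 - s ^ 2 / 2 * x ^ 2 + K * |x| ^ 3) + (s ^ 2 * x - 2 * K * (|x| * x)) * y
          + (-s ^ 2 / 2 + K * |x|) * y ^ 2 + (K * x ^ 2) * |y| + (-2 * K * x) * (y * |y|)
          + K * |y| ^ 3 := by
      intro y
      have habs : |x - y| ≤ |x| + |y| := by
        calc |x - y| = |x + -y| := by rw [sub_eq_add_neg]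
          _ ≤ |x| + |-y| := abs_add_le _ _
          _ = |x| + |y| := by rw [abs_neg]
      have h3 : |x - y| ^ 3 ≤ (x - y) ^ 2 * (|x| + |y|) := by
        calc |x - y| ^ 3 = (x - y) ^ 2 * |x - y| := by rw [← sq_abs]; ring
          _ ≤ (x - y) ^ 2 * (|x| + |y|) := mul_le_mul_of_nonneg_left habs (sq_nonneg _)
      have h4 : |x| ^ 3 = x ^ 2 * |x| := by rw [← sq_abs]; ring
      have h5 : |y| ^ 3 = y ^ 2 * |y| := by rw [← sq_abs]; ring
      have h1 : Real.cos (s * x - s * y) ≤ 1 - (s * (x - y)) ^ 2 / 2 + K * |x - y| ^ 3 := by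
        have hq := cos_le_quad (s * (x - y))
        rw [show s * x - s * y = s * (x - y) by ring]
        refine hq.trans_eq ?_
        rw [hK, abs_mul]
        ring
      calc Real.cos (s * x - s * y)
          ≤ 1 - (s * (x - y)) ^ 2 / 2 + K * |x - y| ^ 3 := h1
        _ ≤ 1 - (s * (x - y)) ^ 2 / 2 + K * ((x - y) ^ 2 * (|x| + |y|)) :=
            add_le_add_right (mul_le_mul_of_nonneg_left h3 hK0) _
        _ = (1 - s ^ 2 / 2 * x ^ 2 + K * |x| ^ 3) + (s ^ 2 * x - 2 * K * (|x| * x)) * y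
            + (-s ^ 2 / 2 + K * |x|) * y ^ 2 + (K * x ^ 2) * |y| + (-2 * K * x) * (y * |y|)
            + K * |y| ^ 3 := by rw [h4, h5]; ring
    have e2 : ∫ y, Real.cos (s * x - s * y) ∂μ
        ≤ (1 - s ^ 2 / 2 * x ^ 2 + K * |x| ^ 3) + (-s ^ 2 / 2 + K * |x|)
          + (K * x ^ 2) * m1 + (-2 * K * x) * m2 + K * β3 := by
      calc ∫ y, Real.cos (s * x - s * y) ∂μ
          ≤ ∫ y, ((1 - s ^ 2 / 2 * x ^ 2 + K * |x| ^ 3) + (s ^ 2 * x - 2 * K * (|x| * x)) * y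
            + (-s ^ 2 / 2 + K * |x|) * y ^ 2 + (K * x ^ 2) * |y| + (-2 * K * x) * (y * |y|)
            + K * |y| ^ 3) ∂μ :=
            integral_mono hicsub (hP _ _ _ _ _ _).1 hpt
        _ = _ := (hP _ _ _ _ _ _).2
    calc A * Real.cos (s * x) + B * Real.sin (s * x)
        = ∫ y, Real.cos (s * x - s * y) ∂μ := by rw [e1]; ring
      _ ≤ (1 - s ^ 2 / 2 * x ^ 2 + K * |x| ^ 3) + (-s ^ 2 / 2 + K * |x|)
          + (K * x ^ 2) * m1 + (-2 * K * x) * m2 + K * β3 := e2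
      _ = _ := by ring
  -- m1 ≤ 1
  have m1_le : m1 ≤ 1 := by
    have h1 : m1 ≤ ∫ x, (1/2 + 0 * x + 1/2 * x ^ 2 + 0 * |x| + 0 * (x * |x|) + 0 * |x| ^ 3) ∂μ := by
      refine integral_mono hiabs (hP _ _ _ _ _ _).1 (fun x => ?_)
      nlinarith [sq_nonneg (|x| - 1), sq_abs x]
    rw [(hP _ _ _ _ _ _).2] at h1
    linarith
  -- outer integration
  have outer : A ^ 2 + B ^ 2 ≤ 1 - s ^ 2 + 2 * K * (β3 + 1) := by
    have hAB : A ^ 2 + B ^ 2 = ∫ x, (A * Real.cos (s * x) + B * Real.sin (s * x)) ∂μ := by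
      rw [hT]; ring
    have h1 : ∫ x, (A * Real.cos (s * x) + B * Real.sin (s * x)) ∂μ
        ≤ ∫ x, ((1 - s ^ 2 / 2 + K * β3) + (-2 * K * m2) * x + (-s ^ 2 / 2 + K * m1) * x ^ 2
          + K * |x| + 0 * (x * |x|) + K * |x| ^ 3) ∂μ :=
      integral_mono ((hicos.const_mul A).add (hisin.const_mul B)) (hP _ _ _ _ _ _).1 key
    rw [(hP _ _ _ _ _ _).2] at h1
    have hKm : K * m1 ≤ K * 1 := mul_le_mul_of_nonneg_left m1_le hK0
    rw [hAB]
    nlinarith [h1, hKm]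
  -- conclude
  have h1 : ‖f s‖ ^ 2 ≤ Real.exp (-s ^ 2 + 2 * K * (β3 + 1)) := by
    rw [hfs2]
    have := Real.add_one_le_exp (-s ^ 2 + 2 * K * (β3 + 1))
    linarith
  have h2 : ‖f s‖ ≤ Real.exp ((-s ^ 2 + 2 * K * (β3 + 1)) / 2) := by
    have e : (Real.exp ((-s ^ 2 + 2 * K * (β3 + 1)) / 2)) ^ 2
        = Real.exp (-s ^ 2 + 2 * K * (β3 + 1)) := by
      rw [← Real.exp_nat_mul]
      congr 1
      push_cast
      ring
    calc ‖f s‖ = Real.sqrt (‖f s‖ ^ 2) := (Real.sqrt_sq (norm_nonneg _)).symm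
      _ ≤ Real.sqrt ((Real.exp ((-s ^ 2 + 2 * K * (β3 + 1)) / 2)) ^ 2) :=
        Real.sqrt_le_sqrt (by rw [e]; exact h1)
      _ = Real.exp ((-s ^ 2 + 2 * K * (β3 + 1)) / 2) := Real.sqrt_sq (Real.exp_pos _).le
  calc ‖(f s) ^ n‖ = ‖f s‖ ^ n := norm_pow _ _
    _ ≤ (Real.exp ((-s ^ 2 + 2 * K * (β3 + 1)) / 2)) ^ n :=
      pow_le_pow_left₀ (norm_nonneg _) h2 n
    _ = Real.exp ((n : ℝ) * ((-s ^ 2 + 2 * K * (β3 + 1)) / 2)) := by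
      rw [← Real.exp_nat_mul]
    _ = Real.exp (-t ^ 2 / 2 + kappa * (β3 / r + 1 / r) * |t| ^ 3) := by
      congr 1
      rw [hK, hs, hrn, abs_div, abs_of_pos hrpos, div_pow, div_pow]
      field_simp
end

section
/- Let X₁, X₂, … be i.i.d. real random variables with E X₁ = μ, Var X₁ = σ² > 0 and β³ := E|X₁|³ < ∞, let 0 < ν ≤ 1, let N_ν be a Poisson random variable with parameter ν independent of the X_i, and let Y = X₁ + ⋯ + X_{N_ν} (Y = 0 if N_ν = 0). Then E Y = μν, Var Y = (μ²+σ²)ν, and E|Y − μν|³ ≤ ν β³ (1 + 40ν). -/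
open MeasureTheory ProbabilityTheory


-- pointwise real inequalities
lemma cp_abs_le (a : ℝ) : |a| ≤ (2 + |a|^3)/3 := by
  nlinarith [sq_nonneg (|a| - 1), abs_nonneg a]

lemma cp_sq_le (a : ℝ) : a^2 ≤ (1 + 2*|a|^3)/3 := by
  nlinarith [sq_nonneg (|a| - 1), abs_nonneg a, sq_abs a]

lemma cp_mul_sq_le {t s : ℝ} (ht : 0 ≤ t) (hs : 0 ≤ s) : t * s^2 ≤ (t^3 + 2*s^3)/3 := by
  nlinarith [sq_nonneg (t - s), mul_nonneg ht hs]

lemma cp_mul_le {t s : ℝ} (ht : 0 ≤ t) (hs : 0 ≤ s) : t * s ≤ (t^2 + s^2)/2 := by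
  nlinarith [sq_nonneg (t - s)]

lemma cp_cube_sum {k : ℕ} (f : ℕ → ℝ) (hf : ∀ i, 0 ≤ f i) :
    (∑ i ∈ Finset.range k, f i)^3 ≤ (k:ℝ)^2 * ∑ i ∈ Finset.range k, (f i)^3 := by
  rcases Nat.eq_zero_or_pos k with rfl | hk
  · simp
  · have h := pow_sum_div_card_le_sum_pow (s := Finset.range k) (f := f)
      (fun i _ => hf i) 2
    rw [Finset.card_range, div_le_iff₀ (by positivity)] at h
    calc (∑ i ∈ Finset.range k, f i)^3 ≤ (∑ i ∈ Finset.range k, (f i)^3) * (k:ℝ)^2 := h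
    _ = (k:ℝ)^2 * ∑ i ∈ Finset.range k, (f i)^3 := by ring

lemma cp_cube_abs (a c : ℝ) :
    |a - c|^3 ≤ abs a^3 + 3*(abs c)*a^2 + 3*(abs c)^2*(abs a) + (abs c)^3 := by
  have h : |a - c| ≤ |a| + |c| := abs_sub a c
  calc |a - c|^3 ≤ (|a| + |c|)^3 := pow_le_pow_left₀ (abs_nonneg _) h 3
  _ = abs a^3 + 3*(abs c)*(abs a)^2 + 3*(abs c)^2*(abs a) + (abs c)^3 := by ring
  _ = abs a^3 + 3*(abs c)*a^2 + 3*(abs c)^2*(abs a) + (abs c)^3 := by rw [sq_abs]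

lemma cp_cube_four (a c : ℝ) : |a - c|^3 ≤ 4*(abs a)^3 + 4*(abs c)^3 := by
  have h : |a - c| ≤ |a| + |c| := (abs_sub a c)
  have := pow_le_pow_left₀ (abs_nonneg (a-c)) h 3
  nlinarith [abs_nonneg a, abs_nonneg c, sq_nonneg (|a| - |c|), mul_nonneg (abs_nonneg a) (abs_nonneg c)]

lemma cp_poisson_sums (ν : ℝ) (p : ℕ → ℝ)
    (hshift : ∀ j : ℕ, ((j:ℝ)+1) * p (j+1) = ν * p j)
    (hsum : Summable p) (htot : ∑' k, p k = 1) :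
    HasSum (fun k : ℕ => (k:ℝ) * p k) ν ∧ HasSum (fun k : ℕ => (k:ℝ)^2 * p k) (ν^2+ν) ∧
      HasSum (fun k : ℕ => (k:ℝ)^3 * p k) (ν^3+3*ν^2+ν) := by
  have hsucc1 : ∀ j : ℕ, ((j+1:ℕ):ℝ) * p (j+1) = ν * p j := by
    intro j; push_cast; exact hshift j
  have hs1 : Summable (fun k : ℕ => (k:ℝ) * p k) := by
    refine (summable_nat_add_iff 1).1 ?_
    exact (summable_congr fun j => hsucc1 j).2 (hsum.mul_left ν)
  have t1 : ∑' k : ℕ, (k:ℝ) * p k = ν := by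
    rw [Summable.tsum_eq_zero_add hs1]
    rw [tsum_congr fun j => hsucc1 j, tsum_mul_left, htot]
    simp
  have hsucc2 : ∀ j : ℕ, ((j+1:ℕ):ℝ)^2 * p (j+1) = ν * ((j:ℝ) * p j) + ν * p j := by
    intro j; push_cast; linear_combination ((j:ℝ)+1) * hshift j
  have hs2 : Summable (fun k : ℕ => (k:ℝ)^2 * p k) := by
    refine (summable_nat_add_iff 1).1 ?_
    exact (summable_congr fun j => hsucc2 j).2 ((hs1.mul_left ν).add (hsum.mul_left ν))
  have t2 : ∑' k : ℕ, (k:ℝ)^2 * p k = ν^2 + ν := by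
    rw [Summable.tsum_eq_zero_add hs2]
    rw [tsum_congr fun j => hsucc2 j,
      Summable.tsum_add (hs1.mul_left ν) (hsum.mul_left ν), tsum_mul_left, tsum_mul_left, t1, htot]
    simp; ring
  have hsucc3 : ∀ j : ℕ, ((j+1:ℕ):ℝ)^3 * p (j+1)
      = ν * ((j:ℝ)^2 * p j) + (2*ν) * ((j:ℝ) * p j) + ν * p j := by
    intro j; push_cast; linear_combination (((j:ℝ)+1))^2 * hshift j
  have hs3 : Summable (fun k : ℕ => (k:ℝ)^3 * p k) := by
    refine (summable_nat_add_iff 1).1 ?_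
    exact (summable_congr fun j => hsucc3 j).2
      (((hs2.mul_left ν).add (hs1.mul_left (2*ν))).add (hsum.mul_left ν))
  have t3 : ∑' k : ℕ, (k:ℝ)^3 * p k = ν^3 + 3*ν^2 + ν := by
    rw [Summable.tsum_eq_zero_add hs3]
    rw [tsum_congr fun j => hsucc3 j,
      Summable.tsum_add ((hs2.mul_left ν).add (hs1.mul_left (2*ν))) (hsum.mul_left ν),
      Summable.tsum_add (hs2.mul_left ν) (hs1.mul_left (2*ν)),
      tsum_mul_left, tsum_mul_left, tsum_mul_left, t1, t2, htot]
    simp; ring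
  exact ⟨hs1.hasSum_iff.2 t1, hs2.hasSum_iff.2 t2, hs3.hasSum_iff.2 t3⟩

lemma cp_reduce {Ω : Type*} [MeasurableSpace Ω] (P : Measure Ω) [IsProbabilityMeasure P]
    (X : ℕ → Ω → ℝ) (N : Ω → ℕ) (p : ℕ → ℝ) (hp0 : ∀ k, 0 ≤ p k)
    (hmeas : ∀ i, Measurable (X i)) (hNmeas : Measurable N)
    (hNX : IndepFun N (fun ω i => X i ω) P)
    (hNk : ∀ k, P {ω | N ω = k} = ENNReal.ofReal (p k))
    (φ : ℝ → ℝ) (hφ : Measurable φ)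
    (hIk : ∀ k, Integrable (fun ω => φ (∑ i ∈ Finset.range k, X i ω)) P)
    (D : ℕ → ℝ) (hD : ∀ k, ∫ ω, |φ (∑ i ∈ Finset.range k, X i ω)| ∂P ≤ D k)
    (hDsum : Summable (fun k => p k * D k)) :
    ∫ ω, φ (∑ i ∈ Finset.range (N ω), X i ω) ∂P
      = ∑' k, p k * ∫ ω, φ (∑ i ∈ Finset.range k, X i ω) ∂P := by
  set Xv : Ω → ℕ → ℝ := fun ω i => X i ω with hXv
  have hXvm : Measurable Xv := measurable_pi_lambda _ hmeas
  have hpair : Measurable fun ω => (N ω, Xv ω) := hNmeas.prodMk hXvm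
  have hmap : (P.map fun ω => (N ω, Xv ω)) = (P.map N).prod (P.map Xv) :=
    (indepFun_iff_map_prod_eq_prod_map_map hNmeas.aemeasurable hXvm.aemeasurable).1 hNX
  have hPN : IsProbabilityMeasure (P.map N) := Measure.isProbabilityMeasure_map hNmeas.aemeasurable
  have hPXv : IsProbabilityMeasure (P.map Xv) := Measure.isProbabilityMeasure_map hXvm.aemeasurable
  have hNk' : ∀ k, (P.map N) {k} = ENNReal.ofReal (p k) := by
    intro k
    rw [Measure.map_apply hNmeas (measurableSet_singleton k)]
    exact hNk k
  set G : ℕ × (ℕ → ℝ) → ℝ := fun q => φ (∑ i ∈ Finset.range q.1, q.2 i) with hG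
  have hGm : Measurable G := by
    have h1 : Measurable fun q : (ℕ → ℝ) × ℕ => φ (∑ i ∈ Finset.range q.2, q.1 i) := by
      apply measurable_from_prod_countable_left
      intro n
      show Measurable fun x : ℕ → ℝ => φ (∑ i ∈ Finset.range n, x i)
      exact hφ.comp (Finset.measurable_sum _ fun i _ => measurable_pi_apply i)
    exact h1.comp measurable_swap
  have hGkm : ∀ k, Measurable fun x : ℕ → ℝ => G (k, x) := by
    intro k
    show Measurable fun x : ℕ → ℝ => φ (∑ i ∈ Finset.range k, x i)
    exact hφ.comp (Finset.measurable_sum _ fun i _ => measurable_pi_apply i)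
  have hD0 : ∀ k, 0 ≤ D k := fun k =>
    le_trans (integral_nonneg fun ω => abs_nonneg _) (hD k)
  -- inner lintegral identity
  have hinner : ∀ k, ∫⁻ x, ‖G (k, x)‖ₑ ∂(P.map Xv)
      = ENNReal.ofReal (∫ ω, |φ (∑ i ∈ Finset.range k, X i ω)| ∂P) := by
    intro k
    rw [lintegral_map (hGkm k).enorm hXvm,
      ← ofReal_integral_norm_eq_lintegral_enorm (hIk k)]
    simp only [Real.norm_eq_abs]
  -- integrability over the product measure
  have hGint : Integrable G ((P.map N).prod (P.map Xv)) := by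
    refine ⟨hGm.aestronglyMeasurable, ?_⟩
    show (∫⁻ q, ‖G q‖ₑ ∂(P.map N).prod (P.map Xv)) < ⊤
    calc ∫⁻ q, ‖G q‖ₑ ∂(P.map N).prod (P.map Xv)
        = ∫⁻ n, ∫⁻ x, ‖G (n, x)‖ₑ ∂(P.map Xv) ∂(P.map N) :=
          lintegral_prod _ hGm.enorm.aemeasurable
      _ = ∑' k, (∫⁻ x, ‖G (k, x)‖ₑ ∂(P.map Xv)) * (P.map N) {k} := lintegral_countable' _
      _ ≤ ∑' k, ENNReal.ofReal (p k * D k) := by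
          refine ENNReal.tsum_le_tsum fun k => ?_
          rw [hinner k, hNk' k, ← ENNReal.ofReal_mul (integral_nonneg fun ω => abs_nonneg _)]
          refine ENNReal.ofReal_le_ofReal ?_
          rw [mul_comm]
          exact mul_le_mul_of_nonneg_left (hD k) (hp0 k)
      _ = ENNReal.ofReal (∑' k, p k * D k) :=
          (ENNReal.ofReal_tsum_of_nonneg (fun k => mul_nonneg (hp0 k) (hD0 k)) hDsum).symm
      _ < ⊤ := ENNReal.ofReal_lt_top
  -- main computation
  calc ∫ ω, φ (∑ i ∈ Finset.range (N ω), X i ω) ∂P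
      = ∫ q, G q ∂((P.map N).prod (P.map Xv)) := by
        rw [← hmap, integral_map hpair.aemeasurable hGm.aestronglyMeasurable]
    _ = ∫ n, (∫ x, G (n, x) ∂(P.map Xv)) ∂(P.map N) := integral_prod G hGint
    _ = ∑' k, ((P.map N) {k}).toReal • ∫ x, G (k, x) ∂(P.map Xv) :=
        integral_countable' hGint.integral_prod_left
    _ = ∑' k, p k * ∫ ω, φ (∑ i ∈ Finset.range k, X i ω) ∂P := by
        refine tsum_congr fun k => ?_
        rw [hNk' k, ENNReal.toReal_ofReal (hp0 k), smul_eq_mul,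
          integral_map hXvm.aemeasurable (hGkm k).aestronglyMeasurable]


set_option maxHeartbeats 2000000 in
/-- Lemma 7 (moments of a compound Poisson sum): if `X₁, X₂, …` are i.i.d. with mean `μ`,
variance `σ² > 0` and third absolute moment `β³ < ∞`, and `N` is a Poisson random
variable with parameter `ν ∈ (0,1]` independent of the sequence, then the compound
Poisson sum `Y = X₁ + ⋯ + X_N` satisfies `E Y = μν`, `Var Y = (μ²+σ²)ν` and
`E|Y − μν|³ ≤ ν β³ (1 + 40ν)`. -/
theorem compound_poisson_moments {Ω : Type*} [MeasurableSpace Ω]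
    (P : Measure Ω) [IsProbabilityMeasure P]
    (X : ℕ → Ω → ℝ) (N : Ω → ℕ) (μ σ β3 ν : ℝ)
    (hσ : 0 < σ) (hν0 : 0 < ν) (hν1 : ν ≤ 1)
    (hmeas : ∀ i, Measurable (X i)) (hNmeas : Measurable N)
    (hindep : iIndepFun X P)
    (hident : ∀ i, Measure.map (X i) P = Measure.map (X 0) P)
    (hNX : IndepFun N (fun ω i => X i ω) P)
    (hpois : ∀ k : ℕ,
      P {ω | N ω = k} = ENNReal.ofReal (Real.exp (-ν) * ν ^ k / Nat.factorial k))
    (hmean : ∫ ω, X 0 ω ∂P = μ)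
    (hvar : ∫ ω, (X 0 ω - μ) ^ 2 ∂P = σ ^ 2)
    (hint3 : Integrable (fun ω => |X 0 ω| ^ 3) P)
    (hβ3 : β3 = ∫ ω, |X 0 ω| ^ 3 ∂P) :
    (∫ ω, ∑ i ∈ Finset.range (N ω), X i ω ∂P = μ * ν) ∧
    (∫ ω, ((∑ i ∈ Finset.range (N ω), X i ω) - μ * ν) ^ 2 ∂P = (μ ^ 2 + σ ^ 2) * ν) ∧
    (∫ ω, |(∑ i ∈ Finset.range (N ω), X i ω) - μ * ν| ^ 3 ∂P ≤ ν * β3 * (1 + 40 * ν)) := by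
  -- the Poisson weights
  set p : ℕ → ℝ := fun k => Real.exp (-ν) * ν ^ k / (Nat.factorial k : ℝ) with hpdef
  have hp0 : ∀ k, 0 ≤ p k := fun k => by
    rw [hpdef]; positivity
  have hpois' : ∀ k : ℕ, P {ω | N ω = k} = ENNReal.ofReal (p k) := fun k => hpois k
  -- shift identity for the weights
  have hshift : ∀ j : ℕ, ((j:ℝ)+1) * p (j+1) = ν * p j := by
    intro j
    rw [hpdef]
    simp only
    rw [Nat.factorial_succ, pow_succ]
    have hf : ((Nat.factorial j : ℕ):ℝ) ≠ 0 := by exact_mod_cast (Nat.factorial_pos j).ne'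
    have hj : ((j:ℝ)+1) ≠ 0 := by positivity
    push_cast
    field_simp
  -- total mass one, from the partition {N = k}
  have hmeasset : ∀ k, MeasurableSet {ω | N ω = k} := fun k =>
    hNmeas (measurableSet_singleton k)
  have hdisj : Pairwise (Function.onFun Disjoint fun k => {ω | N ω = k}) :=
    fun a b hab => Set.disjoint_left.2 fun ω ha hb => hab ((ha : N ω = a).symm.trans hb)
  have hunion : (⋃ k, {ω | N ω = k}) = Set.univ := by
    ext ω; simp
  have htote : ∑' k, ENNReal.ofReal (p k) = 1 := by
    calc ∑' k, ENNReal.ofReal (p k) = ∑' k, P {ω | N ω = k} :=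
          tsum_congr fun k => (hpois' k).symm
    _ = P (⋃ k, {ω | N ω = k}) := (measure_iUnion hdisj hmeasset).symm
    _ = 1 := by rw [hunion, measure_univ]
  have hsummp : Summable p := by
    have h := ENNReal.summable_toReal (by rw [htote]; exact ENNReal.one_ne_top)
    exact (summable_congr fun k => ENNReal.toReal_ofReal (hp0 k)).1 h
  have htotp : ∑' k, p k = 1 := by
    calc ∑' k, p k = ∑' k, (ENNReal.ofReal (p k)).toReal :=
          tsum_congr fun k => (ENNReal.toReal_ofReal (hp0 k)).symm
    _ = (∑' k, ENNReal.ofReal (p k)).toReal :=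
          (ENNReal.tsum_toReal_eq fun k => ENNReal.ofReal_ne_top).symm
    _ = 1 := by rw [htote]; rfl
  have h0 : HasSum p 1 := hsummp.hasSum_iff.2 htotp
  obtain ⟨h1, h2, h3⟩ := cp_poisson_sums ν p hshift hsummp htotp
  -- transfer of integrals/integrability between the identically distributed Xᵢ
  have htransfer : ∀ (g : ℝ → ℝ), Measurable g → ∀ i : ℕ,
      (∫ ω, g (X i ω) ∂P = ∫ ω, g (X 0 ω) ∂P) ∧
        (Integrable (fun ω => g (X 0 ω)) P → Integrable (fun ω => g (X i ω)) P) := by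
    intro g hg i
    constructor
    · rw [← integral_map (hmeas i).aemeasurable hg.aestronglyMeasurable, hident i,
        integral_map (hmeas 0).aemeasurable hg.aestronglyMeasurable]
    · intro h
      have h0' : Integrable g (P.map (X 0)) :=
        (integrable_map_measure hg.aestronglyMeasurable (hmeas 0).aemeasurable).2 h
      have h1' : Integrable g (P.map (X i)) := by rw [hident i]; exact h0'
      exact (integrable_map_measure hg.aestronglyMeasurable (hmeas i).aemeasurable).1 h1'
  -- basic integrability
  have hXint : ∀ i, Integrable (X i) P := by
    intro i
    have h0' : Integrable (X 0) P := by
      refine Integrable.mono' (((integrable_const (2:ℝ)).add hint3).div_const 3)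
        (hmeas 0).aestronglyMeasurable (Filter.Eventually.of_forall fun ω => ?_)
      rw [Real.norm_eq_abs]
      exact cp_abs_le _
    exact (htransfer (fun x => x) measurable_id i).2 h0'
  have hX2int : ∀ i, Integrable (fun ω => X i ω ^ 2) P := by
    intro i
    have h0' : Integrable (fun ω => X 0 ω ^ 2) P := by
      refine Integrable.mono' (((integrable_const (1:ℝ)).add (hint3.const_mul 2)).div_const 3)
        ((hmeas 0).pow_const 2).aestronglyMeasurable (Filter.Eventually.of_forall fun ω => ?_)
      rw [Real.norm_eq_abs, abs_of_nonneg (sq_nonneg _)]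
      exact cp_sq_le _
    exact (htransfer (fun x => x ^ 2) (measurable_id.pow_const 2) i).2 h0'
  have hX3int : ∀ i, Integrable (fun ω => |X i ω| ^ 3) P := fun i =>
    (htransfer (fun x => |x| ^ 3) (measurable_abs.pow_const 3) i).2 hint3
  have hXabsint : ∀ i, Integrable (fun ω => |X i ω|) P := fun i => (hXint i).abs
  -- basic integrals
  have hXmean : ∀ i, ∫ ω, X i ω ∂P = μ := by
    intro i
    have := (htransfer (fun x => x) measurable_id i).1
    simpa using this.trans hmean
  have hX2mean0 : ∫ ω, X 0 ω ^ 2 ∂P = σ ^ 2 + μ ^ 2 := by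
    have hexp : (fun ω => (X 0 ω - μ) ^ 2)
        = fun ω => X 0 ω ^ 2 - (2*μ) * X 0 ω + μ ^ 2 := funext fun ω => by ring
    rw [hexp] at hvar
    have ha : Integrable (fun ω => X 0 ω ^ 2 - (2*μ) * X 0 ω) P :=
      (hX2int 0).sub ((hXint 0).const_mul (2*μ))
    have hb : Integrable (fun ω => (2*μ) * X 0 ω) P := (hXint 0).const_mul (2*μ)
    rw [integral_add ha (integrable_const _), integral_sub (hX2int 0) hb,
      integral_const_mul _ _, hmean, integral_const, probReal_univ] at hvar
    simp at hvar
    linarith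
  have hX2mean : ∀ i, ∫ ω, X i ω ^ 2 ∂P = σ ^ 2 + μ ^ 2 := by
    intro i
    have := (htransfer (fun x => x ^ 2) (measurable_id.pow_const 2) i).1
    simpa using this.trans hX2mean0
  have hX3mean : ∀ i, ∫ ω, |X i ω| ^ 3 ∂P = β3 := by
    intro i
    have := (htransfer (fun x => |x| ^ 3) (measurable_abs.pow_const 3) i).1
    simpa using this.trans hβ3.symm
  set m1 : ℝ := ∫ ω, |X 0 ω| ∂P with hm1def
  have hXabsmean : ∀ i, ∫ ω, |X i ω| ∂P = m1 := by
    intro i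
    have := (htransfer (fun x => |x|) measurable_abs i).1
    simpa using this
  have hm10 : 0 ≤ m1 := integral_nonneg fun ω => abs_nonneg _
  have hμm1 : |μ| ≤ m1 := by
    rw [← hmean, hm1def]
    have := norm_integral_le_integral_norm (μ := P) (f := X 0)
    simpa [Real.norm_eq_abs] using this
  have hβ0 : 0 ≤ β3 := hβ3 ▸ integral_nonneg fun ω => by positivity
  -- Lyapunov-type facts via independence
  have hm1A : m1 * (σ ^ 2 + μ ^ 2) ≤ β3 := by
    have hind01 : IndepFun (fun ω => |X 0 ω|) (fun ω => X 1 ω ^ 2) P :=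
      (hindep.indepFun (zero_ne_one)).comp measurable_abs (measurable_id.pow_const 2)
    have hmulint : Integrable (fun ω => |X 0 ω| * X 1 ω ^ 2) P :=
      hind01.integrable_mul (hXabsint 0) (hX2int 1)
    have heq : ∫ ω, |X 0 ω| * X 1 ω ^ 2 ∂P = m1 * (σ ^ 2 + μ ^ 2) := by
      have h' : ∫ ω, |X 0 ω| * X 1 ω ^ 2 ∂P
          = (∫ ω, |X 0 ω| ∂P) * ∫ ω, X 1 ω ^ 2 ∂P :=
        hind01.integral_fun_mul_eq_mul_integral (hXabsint 0).1 (hX2int 1).1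
      rw [h', hXabsmean 0, hX2mean 1]
    have hc1 : Integrable (fun ω => 2 * |X 1 ω| ^ 3) P := (hX3int 1).const_mul 2
    have hdint : Integrable (fun ω => (|X 0 ω| ^ 3 + 2 * |X 1 ω| ^ 3) / 3) P :=
      ((hX3int 0).add hc1).div_const 3
    have hdom : ∫ ω, (|X 0 ω| ^ 3 + 2 * |X 1 ω| ^ 3) / 3 ∂P = β3 := by
      rw [integral_div, integral_add (hX3int 0) hc1, integral_const_mul _ _,
        hX3mean 0, hX3mean 1]
      ring
    have hle := integral_mono hmulint hdint
      (fun ω => by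
        have := cp_mul_sq_le (abs_nonneg (X 0 ω)) (abs_nonneg (X 1 ω))
        rwa [sq_abs] at this)
    rw [heq, hdom] at hle
    exact hle
  have hm1sq : m1 ^ 2 ≤ σ ^ 2 + μ ^ 2 := by
    have hind01 : IndepFun (fun ω => |X 0 ω|) (fun ω => |X 1 ω|) P :=
      (hindep.indepFun (zero_ne_one)).comp measurable_abs measurable_abs
    have hmulint : Integrable (fun ω => |X 0 ω| * |X 1 ω|) P :=
      hind01.integrable_mul (hXabsint 0) (hXabsint 1)
    have heq : ∫ ω, |X 0 ω| * |X 1 ω| ∂P = m1 * m1 := by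
      have h' : ∫ ω, |X 0 ω| * |X 1 ω| ∂P
          = (∫ ω, |X 0 ω| ∂P) * ∫ ω, |X 1 ω| ∂P :=
        hind01.integral_fun_mul_eq_mul_integral (hXabsint 0).1 (hXabsint 1).1
      rw [h', hXabsmean 0, hXabsmean 1]
    have hdint : Integrable (fun ω => (X 0 ω ^ 2 + X 1 ω ^ 2) / 2) P :=
      ((hX2int 0).add (hX2int 1)).div_const 2
    have hdom : ∫ ω, (X 0 ω ^ 2 + X 1 ω ^ 2) / 2 ∂P = σ ^ 2 + μ ^ 2 := by
      rw [integral_div, integral_add (hX2int 0) (hX2int 1), hX2mean 0, hX2mean 1]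
      ring
    have hle := integral_mono hmulint hdint
      (fun ω => by
        have := cp_mul_le (abs_nonneg (X 0 ω)) (abs_nonneg (X 1 ω))
        rwa [sq_abs, sq_abs] at this)
    rw [heq, hdom] at hle
    nlinarith
  have hm13 : m1 ^ 3 ≤ β3 := by
    calc m1 ^ 3 = m1 * m1 ^ 2 := by ring
    _ ≤ m1 * (σ ^ 2 + μ ^ 2) := mul_le_mul_of_nonneg_left hm1sq hm10
    _ ≤ β3 := hm1A
  -- pairwise products
  have hprod_int : ∀ i j, Integrable (fun ω => X i ω * X j ω) P := by
    intro i j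
    rcases eq_or_ne i j with rfl | h
    · simpa [pow_two] using hX2int i
    · exact (hindep.indepFun h).integrable_mul (hXint i) (hXint j)
  have hprod_val : ∀ i j : ℕ, ∫ ω, X i ω * X j ω ∂P
      = if i = j then σ ^ 2 + μ ^ 2 else μ * μ := by
    intro i j
    rcases eq_or_ne i j with rfl | h
    · simpa [pow_two] using hX2mean i
    · simp only [if_neg h]
      have h' : ∫ ω, X i ω * X j ω ∂P = (∫ ω, X i ω ∂P) * ∫ ω, X j ω ∂P :=
        (hindep.indepFun h).integral_fun_mul_eq_mul_integral (hXint i).1 (hXint j).1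
      rw [h', hXmean i, hXmean j]
  -- facts about the partial sums S_k
  have hSmeas : ∀ k, Measurable fun ω => ∑ i ∈ Finset.range k, X i ω := fun k =>
    Finset.measurable_sum _ fun i _ => hmeas i
  have hSint : ∀ k, Integrable (fun ω => ∑ i ∈ Finset.range k, X i ω) P := fun k =>
    integrable_finset_sum _ fun i _ => hXint i
  have hSmean : ∀ k : ℕ, ∫ ω, ∑ i ∈ Finset.range k, X i ω ∂P = (k:ℝ) * μ := by
    intro k
    rw [integral_finset_sum _ fun i _ => hXint i]
    rw [Finset.sum_congr rfl fun i _ => hXmean i, Finset.sum_const, Finset.card_range,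
      nsmul_eq_mul]
  have habsS : ∀ k : ℕ, ∫ ω, |∑ i ∈ Finset.range k, X i ω| ∂P ≤ (k:ℝ) * m1 := by
    intro k
    have h1' := integral_mono (hSint k).abs (integrable_finset_sum _ fun i _ => hXabsint i)
      (fun ω => Finset.abs_sum_le_sum_abs _ _)
    have h2' : ∫ ω, ∑ i ∈ Finset.range k, |X i ω| ∂P = (k:ℝ) * m1 := by
      rw [integral_finset_sum _ fun i _ => hXabsint i,
        Finset.sum_congr rfl fun i _ => hXabsmean i, Finset.sum_const, Finset.card_range,
        nsmul_eq_mul]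
    exact h2' ▸ h1'
  -- second moment of S_k
  have hS2eq : ∀ (k : ℕ) (ω : Ω), (∑ i ∈ Finset.range k, X i ω) ^ 2
      = ∑ i ∈ Finset.range k, ∑ j ∈ Finset.range k, X i ω * X j ω := fun k ω => by
    rw [sq, Finset.sum_mul_sum]
  have hS2int : ∀ k, Integrable (fun ω => (∑ i ∈ Finset.range k, X i ω) ^ 2) P := by
    intro k
    have : (fun ω => (∑ i ∈ Finset.range k, X i ω) ^ 2)
        = fun ω => ∑ i ∈ Finset.range k, ∑ j ∈ Finset.range k, X i ω * X j ω :=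
      funext (hS2eq k)
    rw [this]
    exact integrable_finset_sum _ fun i _ =>
      integrable_finset_sum _ fun j _ => hprod_int i j
  have hS2val : ∀ k : ℕ, ∫ ω, (∑ i ∈ Finset.range k, X i ω) ^ 2 ∂P
      = (k:ℝ) * σ ^ 2 + (k:ℝ) ^ 2 * μ ^ 2 := by
    intro k
    have step1 : ∫ ω, (∑ i ∈ Finset.range k, X i ω) ^ 2 ∂P
        = ∑ i ∈ Finset.range k, ∑ j ∈ Finset.range k, ∫ ω, X i ω * X j ω ∂P := by
      rw [integral_congr_ae (Filter.Eventually.of_forall fun ω => hS2eq k ω),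
        integral_finset_sum _ fun i _ => integrable_finset_sum _ fun j _ => hprod_int i j]
      exact Finset.sum_congr rfl fun i _ => integral_finset_sum _ fun j _ => hprod_int i j
    have hrow : ∀ i ∈ Finset.range k,
        (∑ j ∈ Finset.range k, ∫ ω, X i ω * X j ω ∂P)
          = (k:ℝ) * (μ * μ) + (σ ^ 2 + μ ^ 2 - μ * μ) := by
      intro i hi
      have hsplit : ∀ j, (if i = j then σ ^ 2 + μ ^ 2 else μ * μ)
          = μ * μ + (if i = j then σ ^ 2 + μ ^ 2 - μ * μ else 0) := by
        intro j; split <;> ring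
      rw [Finset.sum_congr rfl fun j _ => (hprod_val i j).trans (hsplit j),
        Finset.sum_add_distrib, Finset.sum_const, Finset.sum_ite_eq, if_pos hi,
        Finset.card_range, nsmul_eq_mul]
    rw [step1, Finset.sum_congr rfl hrow, Finset.sum_const, Finset.card_range, nsmul_eq_mul]
    ring
  -- second moment of S_k - μν
  have hBint : ∀ k, Integrable
      (fun ω => ((∑ i ∈ Finset.range k, X i ω) - μ * ν) ^ 2) P := by
    intro k
    have hexp : (fun ω => ((∑ i ∈ Finset.range k, X i ω) - μ * ν) ^ 2)
        = fun ω => (∑ i ∈ Finset.range k, X i ω) ^ 2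
            - (2 * (μ * ν)) * (∑ i ∈ Finset.range k, X i ω) + (μ * ν) ^ 2 :=
      funext fun ω => by ring
    rw [hexp]
    exact ((hS2int k).sub ((hSint k).const_mul _)).add (integrable_const _)
  have hBval : ∀ k : ℕ, ∫ ω, ((∑ i ∈ Finset.range k, X i ω) - μ * ν) ^ 2 ∂P
      = (k:ℝ) * σ ^ 2 + μ ^ 2 * ((k:ℝ) - ν) ^ 2 := by
    intro k
    have hexp : (fun ω => ((∑ i ∈ Finset.range k, X i ω) - μ * ν) ^ 2)
        = fun ω => (∑ i ∈ Finset.range k, X i ω) ^ 2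
            - (2 * (μ * ν)) * (∑ i ∈ Finset.range k, X i ω) + (μ * ν) ^ 2 :=
      funext fun ω => by ring
    have ha : Integrable (fun ω => (∑ i ∈ Finset.range k, X i ω) ^ 2
        - (2 * (μ * ν)) * (∑ i ∈ Finset.range k, X i ω)) P :=
      (hS2int k).sub ((hSint k).const_mul _)
    have hb : Integrable (fun ω => (2 * (μ * ν)) * (∑ i ∈ Finset.range k, X i ω)) P :=
      (hSint k).const_mul _
    rw [hexp, integral_add ha (integrable_const _), integral_sub (hS2int k) hb,
      integral_const_mul _ _, hS2val k, hSmean k, integral_const, probReal_univ]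
    simp
    ring
  -- third absolute moment bounds for S_k
  have hSabs3int : ∀ k, Integrable (fun ω => |∑ i ∈ Finset.range k, X i ω| ^ 3) P := by
    intro k
    have hdint : Integrable (fun ω => (k:ℝ)^2 * ∑ i ∈ Finset.range k, |X i ω| ^ 3) P :=
      (integrable_finset_sum _ fun i _ => hX3int i).const_mul _
    refine Integrable.mono' hdint ((hSmeas k).abs.pow_const 3).aestronglyMeasurable
      (Filter.Eventually.of_forall fun ω => ?_)
    rw [Real.norm_eq_abs, abs_of_nonneg (by positivity)]
    calc |∑ i ∈ Finset.range k, X i ω| ^ 3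
        ≤ (∑ i ∈ Finset.range k, |X i ω|) ^ 3 :=
          pow_le_pow_left₀ (abs_nonneg _) (Finset.abs_sum_le_sum_abs _ _) 3
    _ ≤ (k:ℝ)^2 * ∑ i ∈ Finset.range k, |X i ω| ^ 3 :=
          cp_cube_sum _ fun i => abs_nonneg _
  have hSabs3val : ∀ k : ℕ, ∫ ω, |∑ i ∈ Finset.range k, X i ω| ^ 3 ∂P
      ≤ (k:ℝ)^3 * β3 := by
    intro k
    have hdint : Integrable (fun ω => (k:ℝ)^2 * ∑ i ∈ Finset.range k, |X i ω| ^ 3) P :=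
      (integrable_finset_sum _ fun i _ => hX3int i).const_mul _
    have hle := integral_mono (hSabs3int k) hdint (fun ω => by
      calc |∑ i ∈ Finset.range k, X i ω| ^ 3
          ≤ (∑ i ∈ Finset.range k, |X i ω|) ^ 3 :=
            pow_le_pow_left₀ (abs_nonneg _) (Finset.abs_sum_le_sum_abs _ _) 3
      _ ≤ (k:ℝ)^2 * ∑ i ∈ Finset.range k, |X i ω| ^ 3 :=
            cp_cube_sum _ fun i => abs_nonneg _)
    have hval : ∫ ω, (k:ℝ)^2 * ∑ i ∈ Finset.range k, |X i ω| ^ 3 ∂P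
        = (k:ℝ)^2 * ((k:ℝ) * β3) := by
      rw [integral_const_mul _ _, integral_finset_sum _ fun i _ => hX3int i,
        Finset.sum_congr rfl fun i _ => hX3mean i, Finset.sum_const, Finset.card_range,
        nsmul_eq_mul]
    rw [hval] at hle
    exact hle.trans (le_of_eq (by ring))
  have hCint : ∀ k, Integrable
      (fun ω => |(∑ i ∈ Finset.range k, X i ω) - μ * ν| ^ 3) P := by
    intro k
    have hdint : Integrable
        (fun ω => 4 * |∑ i ∈ Finset.range k, X i ω| ^ 3 + 4 * |μ * ν| ^ 3) P :=
      ((hSabs3int k).const_mul 4).add (integrable_const _)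
    refine Integrable.mono' hdint
      (((hSmeas k).sub_const _).abs.pow_const 3).aestronglyMeasurable
      (Filter.Eventually.of_forall fun ω => ?_)
    rw [Real.norm_eq_abs, abs_of_nonneg (by positivity)]
    exact cp_cube_four _ _
  have hCval : ∀ k : ℕ, ∫ ω, |(∑ i ∈ Finset.range k, X i ω) - μ * ν| ^ 3 ∂P
      ≤ β3 * ((k:ℝ) + ν) ^ 3 := by
    intro k
    have ha : Integrable (fun ω => |∑ i ∈ Finset.range k, X i ω| ^ 3
        + 3 * |μ * ν| * (∑ i ∈ Finset.range k, X i ω) ^ 2) P :=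
      (hSabs3int k).add ((hS2int k).const_mul _)
    have hb : Integrable (fun ω => |∑ i ∈ Finset.range k, X i ω| ^ 3
        + 3 * |μ * ν| * (∑ i ∈ Finset.range k, X i ω) ^ 2
        + 3 * |μ * ν| ^ 2 * |∑ i ∈ Finset.range k, X i ω|) P :=
      ha.add ((hSint k).abs.const_mul _)
    have hRint : Integrable (fun ω => |∑ i ∈ Finset.range k, X i ω| ^ 3
        + 3 * |μ * ν| * (∑ i ∈ Finset.range k, X i ω) ^ 2
        + 3 * |μ * ν| ^ 2 * |∑ i ∈ Finset.range k, X i ω|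
        + |μ * ν| ^ 3) P := hb.add (integrable_const _)
    have hle := integral_mono (hCint k) hRint (fun ω => cp_cube_abs _ _)
    rw [integral_add hb (integrable_const _), integral_add ha ((hSint k).abs.const_mul _),
      integral_add (hSabs3int k) ((hS2int k).const_mul _), integral_const_mul _ _,
      integral_const_mul _ _, integral_const, probReal_univ, one_smul,
      hS2val k] at hle
    -- numeric bounds
    have hk0 : (0:ℝ) ≤ (k:ℝ) := Nat.cast_nonneg k
    have hkk : (k:ℝ) ≤ (k:ℝ)^2 := by exact_mod_cast Nat.le_self_pow two_ne_zero k
    have hcabs : |μ * ν| = |μ| * ν := by rw [abs_mul, abs_of_pos hν0]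
    have hμA : |μ| * (σ^2 + μ^2) ≤ β3 :=
      le_trans (mul_le_mul_of_nonneg_right hμm1 (by positivity)) hm1A
    have hμ3 : |μ|^3 ≤ β3 := le_trans (pow_le_pow_left₀ (abs_nonneg μ) hμm1 3) hm13
    have hμ2m1 : μ^2 * m1 ≤ β3 := by
      have h' : μ^2 ≤ m1^2 := by
        rw [← sq_abs]
        exact pow_le_pow_left₀ (abs_nonneg μ) hμm1 2
      nlinarith [hm10, hm13, abs_nonneg μ]
    have habs3 : |μ|^3 = |μ| * μ^2 := by rw [← sq_abs]; ring
    have t1 : ∫ ω, |∑ i ∈ Finset.range k, X i ω| ^ 3 ∂P ≤ (k:ℝ)^3 * β3 := hSabs3val k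
    have e2 : |μ| * ((k:ℝ)*σ^2 + (k:ℝ)^2*μ^2) ≤ (k:ℝ)^2 * β3 := by
      have eid : |μ| * ((k:ℝ)*σ^2 + (k:ℝ)^2*μ^2)
          = (k:ℝ) * (|μ| * (σ^2+μ^2)) + ((k:ℝ)^2-(k:ℝ)) * |μ|^3 := by
        rw [habs3]; ring
      rw [eid]
      have := add_le_add (mul_le_mul_of_nonneg_left hμA hk0)
        (mul_le_mul_of_nonneg_left hμ3 (by linarith : (0:ℝ) ≤ (k:ℝ)^2-(k:ℝ)))
      linarith
    have t2 : 3 * |μ * ν| * ((k:ℝ)*σ^2 + (k:ℝ)^2*μ^2) ≤ 3*ν*((k:ℝ)^2*β3) := by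
      rw [hcabs]
      calc 3 * (|μ| * ν) * ((k:ℝ)*σ^2 + (k:ℝ)^2*μ^2)
          = (3*ν) * (|μ| * ((k:ℝ)*σ^2 + (k:ℝ)^2*μ^2)) := by ring
      _ ≤ (3*ν) * ((k:ℝ)^2 * β3) := mul_le_mul_of_nonneg_left e2 (by positivity)
      _ = 3*ν*((k:ℝ)^2*β3) := by ring
    have t3 : 3 * |μ * ν| ^ 2 * (∫ ω, |∑ i ∈ Finset.range k, X i ω| ∂P)
        ≤ 3*ν^2*((k:ℝ)*β3) := by
      have hsq : |μ * ν| ^ 2 = μ^2 * ν^2 := by rw [sq_abs]; ring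
      rw [hsq]
      calc 3 * (μ^2 * ν^2) * (∫ ω, |∑ i ∈ Finset.range k, X i ω| ∂P)
          ≤ 3 * (μ^2 * ν^2) * ((k:ℝ) * m1) :=
            mul_le_mul_of_nonneg_left (habsS k) (by positivity)
      _ = (3*ν^2*(k:ℝ)) * (μ^2 * m1) := by ring
      _ ≤ (3*ν^2*(k:ℝ)) * β3 := mul_le_mul_of_nonneg_left hμ2m1 (by positivity)
      _ = 3*ν^2*((k:ℝ)*β3) := by ring
    have t4 : |μ * ν| ^ 3 ≤ ν^3 * β3 := by
      rw [hcabs]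
      calc (|μ| * ν)^3 = ν^3 * |μ|^3 := by ring
      _ ≤ ν^3 * β3 := mul_le_mul_of_nonneg_left hμ3 (by positivity)
    have hfin : β3 * ((k:ℝ) + ν) ^ 3
        = (k:ℝ)^3*β3 + 3*ν*((k:ℝ)^2*β3) + 3*ν^2*((k:ℝ)*β3) + ν^3*β3 := by ring
    linarith
  -- apply the reduction lemma to the three test functions
  have hDsum1 : Summable (fun k => p k * ((k:ℝ) * m1)) :=
    ((h1.summable).mul_left m1).congr fun k => by ring
  have key1 : ∫ ω, ∑ i ∈ Finset.range (N ω), X i ω ∂P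
      = ∑' k, p k * ∫ ω, ∑ i ∈ Finset.range k, X i ω ∂P :=
    cp_reduce P X N p hp0 hmeas hNmeas hNX hpois' (fun x => x) measurable_id
      hSint (fun k => (k:ℝ) * m1) (fun k => habsS k) hDsum1
  have hcomb2 : HasSum (fun k : ℕ => σ^2*((k:ℝ)*p k)
      + (μ^2*((k:ℝ)^2*p k) + ((-(2*μ^2*ν))*((k:ℝ)*p k) + (μ^2*ν^2)*p k)))
      (σ^2*ν + (μ^2*(ν^2+ν) + ((-(2*μ^2*ν))*ν + (μ^2*ν^2)*1))) :=
    (h1.mul_left _).add ((h2.mul_left _).add ((h1.mul_left _).add (h0.mul_left _)))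
  have hDsum2 : Summable (fun k => p k * ((k:ℝ)*σ^2 + μ^2*((k:ℝ)-ν)^2)) :=
    hcomb2.summable.congr fun k => by push_cast; ring
  have hD2 : ∀ k : ℕ, ∫ ω, |((∑ i ∈ Finset.range k, X i ω) - μ * ν) ^ 2| ∂P
      ≤ (k:ℝ)*σ^2 + μ^2*((k:ℝ)-ν)^2 := by
    intro k
    have heq : ∫ ω, |((∑ i ∈ Finset.range k, X i ω) - μ * ν) ^ 2| ∂P
        = ∫ ω, ((∑ i ∈ Finset.range k, X i ω) - μ * ν) ^ 2 ∂P :=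
      integral_congr_ae (Filter.Eventually.of_forall fun ω => abs_of_nonneg (sq_nonneg _))
    rw [heq, hBval k]
  have key2 : ∫ ω, ((∑ i ∈ Finset.range (N ω), X i ω) - μ * ν) ^ 2 ∂P
      = ∑' k, p k * ∫ ω, ((∑ i ∈ Finset.range k, X i ω) - μ * ν) ^ 2 ∂P :=
    cp_reduce P X N p hp0 hmeas hNmeas hNX hpois' (fun x => (x - μ * ν) ^ 2)
      ((measurable_id.sub_const _).pow_const 2) (fun k => hBint k)
      (fun k => (k:ℝ)*σ^2 + μ^2*((k:ℝ)-ν)^2) (fun k => hD2 k) hDsum2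
  have hcomb3 : HasSum (fun k : ℕ => β3*((k:ℝ)^3*p k)
      + ((3*β3*ν)*((k:ℝ)^2*p k) + ((3*β3*ν^2)*((k:ℝ)*p k) + (β3*ν^3)*p k)))
      (β3*(ν^3+3*ν^2+ν) + ((3*β3*ν)*(ν^2+ν) + ((3*β3*ν^2)*ν + (β3*ν^3)*1))) :=
    (h3.mul_left _).add ((h2.mul_left _).add ((h1.mul_left _).add (h0.mul_left _)))
  have hRHS : HasSum (fun k : ℕ => p k * (β3*((k:ℝ)+ν)^3))
      (β3*(ν^3+3*ν^2+ν) + ((3*β3*ν)*(ν^2+ν) + ((3*β3*ν^2)*ν + (β3*ν^3)*1))) := by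
    have hfun : (fun k : ℕ => β3*((k:ℝ)^3*p k)
        + ((3*β3*ν)*((k:ℝ)^2*p k) + ((3*β3*ν^2)*((k:ℝ)*p k) + (β3*ν^3)*p k)))
        = fun k : ℕ => p k * (β3*((k:ℝ)+ν)^3) := funext fun k => by ring
    exact hfun ▸ hcomb3
  have hRsum : Summable (fun k : ℕ => p k * (β3*((k:ℝ)+ν)^3)) := hRHS.summable
  have hD3 : ∀ k : ℕ, ∫ ω, abs (|(∑ i ∈ Finset.range k, X i ω) - μ * ν| ^ 3) ∂P
      ≤ β3*((k:ℝ)+ν)^3 := by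
    intro k
    have heq : ∫ ω, abs (|(∑ i ∈ Finset.range k, X i ω) - μ * ν| ^ 3) ∂P
        = ∫ ω, |(∑ i ∈ Finset.range k, X i ω) - μ * ν| ^ 3 ∂P :=
      integral_congr_ae (Filter.Eventually.of_forall fun ω =>
        abs_of_nonneg (by positivity))
    rw [heq]
    exact hCval k
  have key3 : ∫ ω, |(∑ i ∈ Finset.range (N ω), X i ω) - μ * ν| ^ 3 ∂P
      = ∑' k, p k * ∫ ω, |(∑ i ∈ Finset.range k, X i ω) - μ * ν| ^ 3 ∂P :=
    cp_reduce P X N p hp0 hmeas hNmeas hNX hpois' (fun x => |x - μ * ν| ^ 3)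
      ((measurable_id.sub_const _).abs.pow_const 3) (fun k => hCint k)
      (fun k => β3*((k:ℝ)+ν)^3) (fun k => hD3 k) hRsum
  refine ⟨?_, ?_, ?_⟩
  · rw [key1]
    calc ∑' k : ℕ, p k * ∫ ω, ∑ i ∈ Finset.range k, X i ω ∂P
        = ∑' k : ℕ, μ * ((k:ℝ) * p k) := tsum_congr fun k => by rw [hSmean k]; ring
    _ = μ * ν := by rw [tsum_mul_left, h1.tsum_eq]
  · rw [key2]
    calc ∑' k : ℕ, p k * ∫ ω, ((∑ i ∈ Finset.range k, X i ω) - μ * ν) ^ 2 ∂P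
        = ∑' k : ℕ, (σ^2*((k:ℝ)*p k)
            + (μ^2*((k:ℝ)^2*p k) + ((-(2*μ^2*ν))*((k:ℝ)*p k) + (μ^2*ν^2)*p k))) :=
          tsum_congr fun k => by rw [hBval k]; ring
    _ = σ^2*ν + (μ^2*(ν^2+ν) + ((-(2*μ^2*ν))*ν + (μ^2*ν^2)*1)) := hcomb2.tsum_eq
    _ = (μ ^ 2 + σ ^ 2) * ν := by ring
  · rw [key3]
    have hterm : ∀ k : ℕ, p k * ∫ ω, |(∑ i ∈ Finset.range k, X i ω) - μ * ν| ^ 3 ∂P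
        ≤ p k * (β3*((k:ℝ)+ν)^3) := fun k =>
      mul_le_mul_of_nonneg_left (hCval k) (hp0 k)
    have hLsum : Summable
        (fun k => p k * ∫ ω, |(∑ i ∈ Finset.range k, X i ω) - μ * ν| ^ 3 ∂P) :=
      Summable.of_nonneg_of_le
        (fun k => mul_nonneg (hp0 k) (integral_nonneg fun ω => by positivity))
        hterm hRsum
    calc ∑' k : ℕ, p k * ∫ ω, |(∑ i ∈ Finset.range k, X i ω) - μ * ν| ^ 3 ∂P
        ≤ ∑' k : ℕ, p k * (β3*((k:ℝ)+ν)^3) := Summable.tsum_le_tsum hterm hLsum hRsum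
    _ = β3*(ν^3+3*ν^2+ν) + ((3*β3*ν)*(ν^2+ν) + ((3*β3*ν^2)*ν + (β3*ν^3)*1)) :=
        hRHS.tsum_eq
    _ ≤ ν * β3 * (1 + 40 * ν) := by
        nlinarith [mul_nonneg hβ0 (sq_nonneg ν),
          mul_le_of_le_one_right (mul_nonneg hβ0 (sq_nonneg ν)) hν1, hν0.le, hβ0]
end
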